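/- arXiv:math/0312377 — 2 statements merged into one kernel-verified Lean document; each statement's English description precedes it below -/
import Mathlib

section
/- Let D ∈ D(n,m) and D' ∈ D(m,l) be Temperley–Lieb diagrams with no closed loops in their concatenation (ζ(D,D') = 0). If X is mask equivalent to R_q(D) and Y is mask equivalent to R_q(D'), then the product XY is mask equivalent to R_q(D∘D'). -/
namespace TLBlob

/-- The boundary nodes of an `(n,m)` Temperley–Lieb diagram: `Sum.inl i` is the
`i`-th northern node (0-based), `Sum.inr j` the `j`-th southern node (0-based). -/
abbrev TLNode (n m : ℕ) := Sum (Fin n) (Fin m)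

/-- Position of a node in the linear order obtained by reading the northern nodes
left to right and then the southern nodes right to left (so that noncrossing
matchings in the rectangle correspond to noncrossing chords). -/
def nodePos {n m : ℕ} : TLNode n m → ℕ
  | Sum.inl i => (i : ℕ)
  | Sum.inr j => n + m - 1 - (j : ℕ)

/-- An `(n,m)` Temperley–Lieb diagram: a noncrossing perfect matching (fixed-point
free involution) of the `n` northern and `m` southern nodes. -/
structure TLDiagram (n m : ℕ) where
  pair : TLNode n m → TLNode n m
  involutive : Function.Involutive pair
  fixedFree : ∀ v, pair v ≠ v
  noncrossing : ∀ v w, nodePos v < nodePos w → nodePos w < nodePos (pair v) →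
    nodePos (pair v) < nodePos (pair w) → False

/-- `[2] = q + q⁻¹` where `q = x²`. -/
def twoQ {K : Type*} [CommRing K] (x : Kˣ) : K := (x : K) ^ 2 + ((x⁻¹ : Kˣ) : K) ^ 2

/-- The factor `x^{sign(a-b)}(1-δ_{ab})` associated to a cup/cap line, where the
letters `1,2` of the paper are encoded as `0,1 : Fin 2`. -/
def xfac {K : Type*} [CommRing K] (x : Kˣ) (a b : Fin 2) : K :=
  if a = b then 0 else if b < a then (x : K) else ((x⁻¹ : Kˣ) : K)

/-- The matrix `R_q(D)` associated to an `(n,m)` diagram `D`, with rows indexed by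
words `v ∈ {1,2}ⁿ` (as functions `Fin n → Fin 2`) and columns by `w ∈ {1,2}ᵐ`. -/
def Rmat {K : Type*} [CommRing K] (x : Kˣ) {n m : ℕ} (D : TLDiagram n m) :
    Matrix (Fin n → Fin 2) (Fin m → Fin 2) K := fun v w =>
  (∏ p ∈ Finset.univ.filter
      (fun p : Fin n × Fin n => p.1 < p.2 ∧ D.pair (Sum.inl p.1) = Sum.inl p.2),
    xfac x (v p.1) (v p.2)) *
  (∏ p ∈ Finset.univ.filter
      (fun p : Fin n × Fin m => D.pair (Sum.inl p.1) = Sum.inr p.2),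
    (if v p.1 = w p.2 then (1 : K) else 0)) *
  (∏ p ∈ Finset.univ.filter
      (fun p : Fin m × Fin m => p.1 < p.2 ∧ D.pair (Sum.inr p.1) = Sum.inr p.2),
    xfac x (w p.1) (w p.2))

/-- Two matrices are mask equivalent if they have zero entries in the same places. -/
def MaskEquiv {K : Type*} [CommRing K] {α β : Type*} (M N : Matrix α β K) : Prop :=
  ∀ i j, M i j = 0 ↔ N i j = 0

/-- Nodes of the concatenation `D|D'` of an `(n,m)` and an `(m,l)` diagram:
northern, middle, and southern nodes. -/
abbrev TriNode (n m l : ℕ) := Sum (Fin n) (Sum (Fin m) (Fin l))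

def inUp {n m l : ℕ} : TLNode n m → TriNode n m l
  | Sum.inl i => Sum.inl i
  | Sum.inr j => Sum.inr (Sum.inl j)

def inDown {n m l : ℕ} : TLNode m l → TriNode n m l
  | Sum.inl j => Sum.inr (Sum.inl j)
  | Sum.inr k => Sum.inr (Sum.inr k)

def inOut {n m l : ℕ} : TLNode n l → TriNode n m l
  | Sum.inl i => Sum.inl i
  | Sum.inr k => Sum.inr (Sum.inr k)

/-- Two nodes of the concatenation `D|D'` are linked if they are joined by a line
of `D` or of `D'`. -/
def Linked {n m l : ℕ} (D : TLDiagram n m) (D' : TLDiagram m l) :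
    TriNode n m l → TriNode n m l → Prop := fun u v =>
  (∃ a, inUp a = u ∧ inUp (D.pair a) = v) ∨
  (∃ a, inDown a = u ∧ inDown (D'.pair a) = v)

/-- Connectivity in the concatenation `D|D'`. -/
def Joined {n m l : ℕ} (D : TLDiagram n m) (D' : TLDiagram m l) :
    TriNode n m l → TriNode n m l → Prop :=
  Relation.ReflTransGen (Linked D D')

/-- `E` is the composite diagram `D ∘ D'`: outer nodes are paired in `E` exactly
when they are joined through the concatenation `D|D'`. -/
def IsComposite {n m l : ℕ} (D : TLDiagram n m) (D' : TLDiagram m l)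
    (E : TLDiagram n l) : Prop :=
  ∀ u v : TLNode n l, E.pair u = v ↔ (u ≠ v ∧ Joined D D' (inOut u) (inOut v))

/-- Middle nodes of the concatenation. -/
def IsMiddle {n m l : ℕ} : TriNode n m l → Prop
  | Sum.inr (Sum.inl _) => True
  | _ => False

/-- `ζ(D,D')`: the number of closed loops discarded when forming `D ∘ D'`, i.e. the
number of connected components of the concatenation graph consisting entirely of
middle nodes. -/
noncomputable def zeta {n m l : ℕ} (D : TLDiagram n m) (D' : TLDiagram m l) : ℕ :=
  Nat.card {c : Quot (Linked D D') // ∀ v, Quot.mk (Linked D D') v = c → IsMiddle v}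

/-- The identity diagram `1 ∈ D(n,n)`. -/
def IsId {n : ℕ} (E : TLDiagram n n) : Prop :=
  ∀ i : Fin n, E.pair (Sum.inl i) = Sum.inr i

/-- The diagram `𝒰_i ∈ D(n,n)` (with `1 ≤ i ≤ n-1`, nodes numbered `1,…,n`):
it pairs nodes `(i,i+1)` on the top, `(i',(i+1)')` on the bottom, and `(k,k')`
otherwise.  In the 0-based encoding these are positions `i-1` and `i`. -/
def IsU {n : ℕ} (i : ℕ) (E : TLDiagram n n) : Prop :=
  ∃ (_ : 1 ≤ i) (h2 : i < n),
    E.pair (Sum.inl ⟨i - 1, by omega⟩) = Sum.inl ⟨i, h2⟩ ∧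
    E.pair (Sum.inr ⟨i - 1, by omega⟩) = Sum.inr ⟨i, h2⟩ ∧
    ∀ k : Fin n, (k : ℕ) ≠ i - 1 → (k : ℕ) ≠ i → E.pair (Sum.inl k) = Sum.inr k

/-- The column reached after the first `k` steps of a walk encoded as a word in
`{1,2}ⁿ` (letter `1` = `0 : Fin 2` is a step increasing the column index,
letter `2` = `1 : Fin 2` a step decreasing it). -/
def col {n : ℕ} (a : Fin n → Fin 2) (k : ℕ) : ℤ :=
  ∑ j ∈ Finset.univ.filter (fun j : Fin n => (j : ℕ) < k),
    (if a j = 0 then (1 : ℤ) else -1)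

/-- A word encodes a walk on the 1-Pascal graph (column indices stay nonnegative). -/
def IsWalk {n : ℕ} (a : Fin n → Fin 2) : Prop := ∀ k, 0 ≤ col a k

/-- A pair of walks with a common endpoint, i.e. an element of `W²(n)`. -/
def WalkPair {n : ℕ} (a b : Fin n → Fin 2) : Prop :=
  IsWalk a ∧ IsWalk b ∧ col a n = col b n

/-- Vertex `(l,d)` (level `l`, column `d`) lies in the envelope of the pair `(a,b)`:
between the drawing of `b` reflected in the main vertical and the drawing of `a`,
and not strictly inside the triangle cut off by the piecewise straight line from
`(n,i)` to `(n-i,0)` to `(n,-i)`, where `i = col a n`. -/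
def vertOK {n : ℕ} (a b : Fin n → Fin 2) (l : ℕ) (d : ℤ) : Prop :=
  -(col b l) ≤ d ∧ d ≤ col a l ∧
  ((l : ℤ) - ((n : ℤ) - col a n) ≤ d ∨ d ≤ -((l : ℤ) - ((n : ℤ) - col a n)))

/-- The unit diamond tile with top vertex at level `r`, column `c` (so with
vertices `(r,c)`, `(r+1,c∓1)`, `(r+2,c)`) belongs to the tiling of the envelope
of `(a,b)`. -/
def IsTile {n : ℕ} (a b : Fin n → Fin 2) (r : ℕ) (c : ℤ) : Prop :=
  r + 2 ≤ n ∧ (c - (r : ℤ)) % 2 = 0 ∧ vertOK a b r c ∧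
  vertOK a b (r + 1) (c - 1) ∧ vertOK a b (r + 1) (c + 1) ∧ vertOK a b (r + 2) c

instance {n : ℕ} (a b : Fin n → Fin 2) (r : ℕ) (c : ℤ) : Decidable (IsTile a b r c) := by
  unfold IsTile vertOK; infer_instance

/-- The word `w((a,b))`, as the list of its (1-based) indices: scanning the tiles
of the envelope of `(a,b)` column by column (starting from the side of `a`), top
to bottom within a column, and writing `U_{r+1}` for a tile with top vertex at
level `r` (hence base at row `r+2`). -/
def wordOf {n : ℕ} (a b : Fin n → Fin 2) : List ℕ :=
  (List.range (2 * n + 1)).flatMap fun j =>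
    (List.range (n - 1)).filterMap fun r =>
      if IsTile a b r ((n : ℤ) - (j : ℤ)) then some (r + 1) else none

/-- Extend a word `v ∈ {1,2}ⁿ` by `0` beyond its length (convenience lookup). -/
def ext {n : ℕ} (v : Fin n → Fin 2) (k : ℕ) : Fin 2 :=
  if h : k < n then v ⟨k, h⟩ else 0

/-- The matrix `R(U_i) = R_q(𝒰_i)` acting on `(K²)^{⊗n}`, where `U_i` couples the
(1-based) tensor factors `i` and `i+1`. -/
def RU {K : Type*} [CommRing K] (x : Kˣ) (n i : ℕ) :
    Matrix (Fin n → Fin 2) (Fin n → Fin 2) K := fun v w =>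
  (∏ k ∈ Finset.univ.filter (fun k : Fin n => (k : ℕ) + 1 ≠ i ∧ (k : ℕ) ≠ i),
    (if v k = w k then (1 : K) else 0)) *
  xfac x (ext v (i - 1)) (ext v i) * xfac x (ext w (i - 1)) (ext w i)

/-- `R` of a word in the `U_i`: the corresponding product of matrices. -/
def Rword {K : Type*} [CommRing K] (x : Kˣ) (n : ℕ) (L : List ℕ) :
    Matrix (Fin n → Fin 2) (Fin n → Fin 2) K :=
  (L.map (RU x n)).prod
section Statement2Aux

open Relation

variable {n m l : ℕ}

/-! ### `Fin 2` arithmetic helpers -/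

private lemma f2_cancel : ∀ a b : Fin 2, a + b + b = a := by decide
private lemma f2_ne_iff : ∀ a b : Fin 2, a ≠ b ↔ b = a + 1 := by decide
private lemma f2_absorb : ∀ a b : Fin 2, a + (a + b) = b := by decide
private lemma f2_succ_ne : ∀ a : Fin 2, a + 1 ≠ a := by decide
private lemma f2_inv1 : ∀ e a b : Fin 2, e + (a + b + 1) + b + 1 = e + a + 0 := by decide
private lemma f2_inv2 : ∀ e a b : Fin 2, e + (a + b + 1) + b + 0 = e + a + 1 := by decide

/-! ### levels, signs, neighbour maps -/

def lvl : TriNode n m l → ℕ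
  | Sum.inl _ => 0
  | Sum.inr (Sum.inl _) => 1
  | Sum.inr (Sum.inr _) => 2

/-- Edge sign: `1` for a same-level (cup/cap) edge, `0` for a through edge. -/
def sgn (p q : TriNode n m l) : Fin 2 := if lvl p = lvl q then 1 else 0

lemma sgn_symm (p q : TriNode n m l) : sgn p q = sgn q p := by
  simp [sgn, eq_comm]

/-- Level parity: `1` for middle nodes, `0` for outer ones. -/
def lvlp (p : TriNode n m l) : Fin 2 := if lvl p = 1 then 1 else 0

def toUp : TriNode n m l → Option (TLNode n m)
  | Sum.inl i => some (Sum.inl i)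
  | Sum.inr (Sum.inl j) => some (Sum.inr j)
  | Sum.inr (Sum.inr _) => none

def toDown : TriNode n m l → Option (TLNode m l)
  | Sum.inl _ => none
  | Sum.inr (Sum.inl j) => some (Sum.inl j)
  | Sum.inr (Sum.inr k) => some (Sum.inr k)

variable (D : TLDiagram n m) (D' : TLDiagram m l)

/-- The `D`-neighbour of a node (defined on top and middle nodes). -/
def dN (p : TriNode n m l) : Option (TriNode n m l) :=
  (toUp p).map fun a => inUp (D.pair a)

/-- The `D'`-neighbour of a node (defined on middle and bottom nodes). -/
def dS (p : TriNode n m l) : Option (TriNode n m l) :=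
  (toDown p).map fun a => inDown (D'.pair a)

lemma inUp_injective : Function.Injective (inUp : TLNode n m → TriNode n m l) := by
  intro a b h
  cases a <;> cases b <;> simp [inUp] at h <;> simp [h]

lemma inDown_injective : Function.Injective (inDown : TLNode m l → TriNode n m l) := by
  intro a b h
  cases a <;> cases b <;> simp [inDown] at h <;> simp [h]

lemma toUp_inUp (a : TLNode n m) : toUp (inUp a : TriNode n m l) = some a := by
  cases a <;> rfl

lemma toDown_inDown (a : TLNode m l) : toDown (inDown a : TriNode n m l) = some a := by
  cases a <;> rfl

lemma dN_eq_some {p q : TriNode n m l} :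
    dN D p = some q ↔ ∃ a, inUp a = p ∧ inUp (D.pair a) = q := by
  constructor
  · intro h
    rcases p with i | (j | k)
    · exact ⟨Sum.inl i, rfl, by simpa [dN, toUp] using h⟩
    · exact ⟨Sum.inr j, rfl, by simpa [dN, toUp, inUp] using h⟩
    · simp [dN, toUp] at h
  · rintro ⟨a, rfl, rfl⟩
    simp [dN, toUp_inUp]

lemma dS_eq_some {p q : TriNode n m l} :
    dS D' p = some q ↔ ∃ a, inDown a = p ∧ inDown (D'.pair a) = q := by
  constructor
  · intro h
    rcases p with i | (j | k)
    · simp [dS, toDown] at h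
    · exact ⟨Sum.inl j, rfl, by simpa [dS, toDown, inDown] using h⟩
    · exact ⟨Sum.inr k, rfl, by simpa [dS, toDown, inDown] using h⟩
  · rintro ⟨a, rfl, rfl⟩
    simp [dS, toDown_inDown]

lemma linked_iff {p q : TriNode n m l} :
    Linked D D' p q ↔ (dN D p = some q ∨ dS D' p = some q) := by
  simp [Linked, dN_eq_some, dS_eq_some]

lemma dN_symm {p q : TriNode n m l} (h : dN D p = some q) : dN D q = some p := by
  rcases (dN_eq_some D).mp h with ⟨a, rfl, rfl⟩
  exact (dN_eq_some D).mpr ⟨D.pair a, rfl, by rw [D.involutive a]⟩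

lemma dS_symm {p q : TriNode n m l} (h : dS D' p = some q) : dS D' q = some p := by
  rcases (dS_eq_some D').mp h with ⟨a, rfl, rfl⟩
  exact (dS_eq_some D').mpr ⟨D'.pair a, rfl, by rw [D'.involutive a]⟩

lemma linked_symm {p q : TriNode n m l} (h : Linked D D' p q) : Linked D D' q p := by
  rcases (linked_iff D D').mp h with h' | h'
  · exact (linked_iff D D').mpr (Or.inl (dN_symm D h'))
  · exact (linked_iff D D').mpr (Or.inr (dS_symm D' h'))

lemma sgn_lvlp_up (a b : TLNode n m) :
    sgn (inUp a : TriNode n m l) (inUp b) = lvlp (inUp a : TriNode n m l) + lvlp (inUp b : TriNode n m l) + 1 := by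
  cases a <;> cases b <;> simp [sgn, lvl, lvlp, inUp] <;> decide

lemma sgn_lvlp_down (a b : TLNode m l) :
    sgn (inDown a : TriNode n m l) (inDown b) = lvlp (inDown a : TriNode n m l) + lvlp (inDown b : TriNode n m l) + 1 := by
  cases a <;> cases b <;> simp [sgn, lvl, lvlp, inDown] <;> decide

lemma sgn_dN {p q : TriNode n m l} (h : dN D p = some q) :
    sgn p q = lvlp p + lvlp q + 1 := by
  rcases (dN_eq_some D).mp h with ⟨a, rfl, rfl⟩
  exact sgn_lvlp_up a _

lemma sgn_dS {p q : TriNode n m l} (h : dS D' p = some q) :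
    sgn p q = lvlp p + lvlp q + 1 := by
  rcases (dS_eq_some D').mp h with ⟨a, rfl, rfl⟩
  exact sgn_lvlp_down a _

/-! ### the letter-lifted linking relation -/

/-- Letter-lifted linking: traversing an edge adds the edge sign to the letter. -/
def L2 (s t : TriNode n m l × Fin 2) : Prop :=
  Linked D D' s.1 t.1 ∧ t.2 = s.2 + sgn s.1 t.1

/-- Letter-lifted connectivity. -/
def J2 : TriNode n m l × Fin 2 → TriNode n m l × Fin 2 → Prop :=
  ReflTransGen (L2 D D')

lemma L2_symm : Symmetric (L2 D D') := by
  rintro ⟨p, c⟩ ⟨q, d⟩ ⟨h1, h2⟩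
  refine ⟨linked_symm D D' h1, ?_⟩
  have h2' : d = c + sgn p q := h2
  show c = d + sgn q p
  rw [h2', sgn_symm q p]
  exact (f2_cancel c _).symm

lemma J2_symm {s t : TriNode n m l × Fin 2} (h : J2 D D' s t) : J2 D D' t s :=
  by haveI : Std.Symm (L2 D D') := ⟨fun _ _ hh => L2_symm D D' hh⟩; exact Std.Symm.symm (r := ReflTransGen (L2 D D')) _ _ h

lemma J2_shift {p q : TriNode n m l} {c d t : Fin 2} (h : J2 D D' (p, c) (q, d)) :
    J2 D D' (p, c + t) (q, d + t) := by
  set f : TriNode n m l × Fin 2 → TriNode n m l × Fin 2 := fun s => (s.1, s.2 + t) with hf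
  have key : ∀ s u, J2 D D' s u → J2 D D' (f s) (f u) := by
    intro s u h
    induction h with
    | refl => exact ReflTransGen.refl
    | tail _ hstep ih =>
        refine ReflTransGen.tail ih ⟨hstep.1, ?_⟩
        show _ = _ + sgn _ _
        simp only [hf]
        rw [hstep.2, add_right_comm]
  exact key _ _ h

lemma J2_proj {s t : TriNode n m l × Fin 2} (h : J2 D D' s t) :
    Joined D D' s.1 t.1 := by
  induction h with
  | refl => exact ReflTransGen.refl
  | tail _ hstep ih => exact ReflTransGen.tail ih hstep.1

/-! ### the deterministic alternating walk -/

/-- One step of the deterministic alternating walk: the `Bool` component records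
which diagram's edge is to be used next. -/
def step (s : TriNode n m l × Bool × Fin 2) : Option (TriNode n m l × Bool × Fin 2) :=
  match s.2.1 with
  | true => (dN D s.1).map fun q => (q, false, s.2.2 + sgn s.1 q)
  | false => (dS D' s.1).map fun q => (q, true, s.2.2 + sgn s.1 q)

lemma step_true {p q : TriNode n m l} {e : Fin 2} (hd : dN D p = some q) :
    step D D' (p, true, e) = some (q, false, e + sgn p q) := by
  simp [step, hd]

lemma step_false {p q : TriNode n m l} {e : Fin 2} (hd : dS D' p = some q) :
    step D D' (p, false, e) = some (q, true, e + sgn p q) := by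
  simp [step, hd]

lemma step_eq_some {p q : TriNode n m l} {tag tag' : Bool} {e d : Fin 2}
    (h : step D D' (p, tag, e) = some (q, tag', d)) :
    (tag = true ∧ tag' = false ∧ dN D p = some q ∧ d = e + sgn p q) ∨
    (tag = false ∧ tag' = true ∧ dS D' p = some q ∧ d = e + sgn p q) := by
  cases tag
  · right
    have h' : (dS D' p).map (fun r => (r, true, e + sgn p r)) = some (q, tag', d) := h
    rcases Option.map_eq_some_iff.mp h' with ⟨q', hd, heq⟩
    obtain ⟨rfl, rfl, rfl⟩ : q' = q ∧ true = tag' ∧ e + sgn p q' = d := by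
      simpa [Prod.ext_iff] using heq
    exact ⟨rfl, rfl, hd, rfl⟩
  · left
    have h' : (dN D p).map (fun r => (r, false, e + sgn p r)) = some (q, tag', d) := h
    rcases Option.map_eq_some_iff.mp h' with ⟨q', hd, heq⟩
    obtain ⟨rfl, rfl, rfl⟩ : q' = q ∧ false = tag' ∧ e + sgn p q' = d := by
      simpa [Prod.ext_iff] using heq
    exact ⟨rfl, rfl, hd, rfl⟩

def iter : ℕ → TriNode n m l × Bool × Fin 2 → Option (TriNode n m l × Bool × Fin 2)
  | 0, s => some s
  | k + 1, s => (step D D' s).bind (iter k)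

lemma iter_succ' (k : ℕ) (s : TriNode n m l × Bool × Fin 2) :
    iter D D' (k + 1) s = (iter D D' k s).bind (step D D') := by
  induction k generalizing s with
  | zero => rcases h : step D D' s with _ | t <;> simp [iter, h]
  | succ k ih =>
      rcases h : step D D' s with _ | t
      · simp [iter, h]
      · calc iter D D' (k + 1 + 1) s = iter D D' (k + 1) t := by simp [iter, h]
          _ = (iter D D' k t).bind (step D D') := ih t
          _ = (iter D D' (k + 1) s).bind (step D D') := by simp [iter, h]

lemma iter_add (a b : ℕ) (s : TriNode n m l × Bool × Fin 2) :
    iter D D' (a + b) s = (iter D D' a s).bind (iter D D' b) := by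
  induction b with
  | zero => simp [iter]
  | succ b ih =>
      rw [← Nat.add_assoc, iter_succ', ih]
      rcases h : iter D D' a s with _ | t
      · simp
      · simp [iter_succ']

lemma step_L2 {s t : TriNode n m l × Bool × Fin 2} (h : step D D' s = some t) :
    L2 D D' (s.1, s.2.2) (t.1, t.2.2) := by
  obtain ⟨p, tag, e⟩ := s
  obtain ⟨q, tag', d⟩ := t
  rcases step_eq_some D D' h with ⟨-, -, hd, hl⟩ | ⟨-, -, hd, hl⟩
  · exact ⟨(linked_iff D D').mpr (Or.inl hd), hl⟩
  · exact ⟨(linked_iff D D').mpr (Or.inr hd), hl⟩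

lemma iter_J2 {k : ℕ} {s t : TriNode n m l × Bool × Fin 2}
    (h : iter D D' k s = some t) : J2 D D' (s.1, s.2.2) (t.1, t.2.2) := by
  induction k generalizing s with
  | zero => simp [iter] at h; subst h; exact ReflTransGen.refl
  | succ k ih =>
      simp only [iter] at h
      rcases hs : step D D' s with _ | s'
      · simp [hs] at h
      · rw [hs] at h
        simp only [Option.bind_some] at h
        exact ReflTransGen.head (step_L2 D D' hs) (ih h)

/-! ### letter shift and reversal of the walk -/

/-- Shift the letter of a state. -/
def shf (t : Fin 2) (s : TriNode n m l × Bool × Fin 2) : TriNode n m l × Bool × Fin 2 :=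
  (s.1, s.2.1, s.2.2 + t)

/-- Flip the direction tag of a state. -/
def flp (s : TriNode n m l × Bool × Fin 2) : TriNode n m l × Bool × Fin 2 :=
  (s.1, !s.2.1, s.2.2)

lemma step_shf (t : Fin 2) (s : TriNode n m l × Bool × Fin 2) :
    step D D' (shf t s) = (step D D' s).map (shf t) := by
  obtain ⟨p, tag, e⟩ := s
  cases tag
  · rcases hd : dS D' p with _ | q
    · show step D D' (p, false, e + t) = _
      rw [step, hd, step, hd]
      rfl
    · show step D D' (p, false, e + t) = _
      rw [step_false D D' hd, step_false D D' hd]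
      simp [shf, add_right_comm]
  · rcases hd : dN D p with _ | q
    · show step D D' (p, true, e + t) = _
      rw [step, hd, step, hd]
      rfl
    · show step D D' (p, true, e + t) = _
      rw [step_true D D' hd, step_true D D' hd]
      simp [shf, add_right_comm]

lemma iter_shf (k : ℕ) (t : Fin 2) (s : TriNode n m l × Bool × Fin 2) :
    iter D D' k (shf t s) = (iter D D' k s).map (shf t) := by
  induction k generalizing s with
  | zero => simp [iter]
  | succ k ih =>
      simp only [iter, step_shf]
      rcases h : step D D' s with _ | s' <;> simp [ih]

lemma step_rev {s t : TriNode n m l × Bool × Fin 2} (h : step D D' s = some t) :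
    step D D' (flp t) = some (flp s) := by
  obtain ⟨p, tag, e⟩ := s
  obtain ⟨q, tag', d⟩ := t
  rcases step_eq_some D D' h with ⟨h1, h2, hd, hl⟩ | ⟨h1, h2, hd, hl⟩ <;> subst h1 <;> subst h2
  · show step D D' (q, true, d) = some (p, false, e)
    rw [step_true D D' (dN_symm D hd), hl, sgn_symm q p, f2_cancel]
  · show step D D' (q, false, d) = some (p, true, e)
    rw [step_false D D' (dS_symm D' hd), hl, sgn_symm q p, f2_cancel]

lemma flp_injective : Function.Injective (flp : TriNode n m l × Bool × Fin 2 → _) := by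
  intro s t h
  obtain ⟨p, tag, e⟩ := s
  obtain ⟨q, tag', d⟩ := t
  simp [flp, Prod.ext_iff] at h ⊢
  exact h

lemma step_inj {s s' t : TriNode n m l × Bool × Fin 2}
    (h : step D D' s = some t) (h' : step D D' s' = some t) : s = s' := by
  have := (step_rev D D' h).symm.trans (step_rev D D' h')
  exact flp_injective (Option.some_injective _ this)

lemma dN_ne {p q : TriNode n m l} (h : dN D p = some q) : q ≠ p := by
  rcases (dN_eq_some D).mp h with ⟨a, rfl, rfl⟩
  intro hq
  exact D.fixedFree a (inUp_injective hq)

lemma dS_ne {p q : TriNode n m l} (h : dS D' p = some q) : q ≠ p := by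
  rcases (dS_eq_some D').mp h with ⟨a, rfl, rfl⟩
  intro hq
  exact D'.fixedFree a (inDown_injective hq)

lemma step_ne {s t : TriNode n m l × Bool × Fin 2} (h : step D D' s = some t) :
    t.1 ≠ s.1 := by
  obtain ⟨p, tag, e⟩ := s
  obtain ⟨q, tag', d⟩ := t
  rcases step_eq_some D D' h with ⟨-, -, hd, -⟩ | ⟨-, -, hd, -⟩
  · exact dN_ne D hd
  · exact dS_ne D' hd

/-! ### the parity invariant -/

/-- The parity invariant of a state, constant along the walk. -/
def pinv (s : TriNode n m l × Bool × Fin 2) : Fin 2 :=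
  s.2.2 + lvlp s.1 + (if s.2.1 then 0 else 1)

lemma step_pinv {s t : TriNode n m l × Bool × Fin 2} (h : step D D' s = some t) :
    pinv t = pinv s := by
  obtain ⟨p, tag, e⟩ := s
  obtain ⟨q, tag', d⟩ := t
  rcases step_eq_some D D' h with ⟨h1, h2, hd, hl⟩ | ⟨h1, h2, hd, hl⟩ <;>
      subst h1 <;> subst h2 <;> subst hl
  · show e + sgn p q + lvlp q + 1 = e + lvlp p + 0
    rw [sgn_dN D hd]
    exact f2_inv1 e (lvlp p) (lvlp q)
  · show e + sgn p q + lvlp q + 0 = e + lvlp p + 1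
    rw [sgn_dS D' hd]
    exact f2_inv2 e (lvlp p) (lvlp q)

lemma iter_pinv {k : ℕ} {s t : TriNode n m l × Bool × Fin 2}
    (h : iter D D' k s = some t) : pinv t = pinv s := by
  induction k generalizing s with
  | zero => simp [iter] at h; subst h; rfl
  | succ k ih =>
      simp only [iter] at h
      rcases hs : step D D' s with _ | s'
      · simp [hs] at h
      · rw [hs] at h
        simp only [Option.bind_some] at h
        exact (ih h).trans (step_pinv D D' hs)
/-! ### no odd return to the same node -/

lemma eqvGen_to_rtg {α : Type*} {r : α → α → Prop} (hs : Symmetric r) {a b : α}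
    (h : Relation.EqvGen r a b) : Relation.ReflTransGen r a b := by
  induction h with
  | rel x y h => exact ReflTransGen.single h
  | refl x => exact ReflTransGen.refl
  | symm x y _ ih => haveI : Std.Symm r := ⟨fun _ _ hh => hs hh⟩; exact Std.Symm.symm (r := ReflTransGen r) _ _ ih
  | trans x y z _ _ ih1 ih2 => exact ih1.trans ih2

/-- Palindrome lemma: the deterministic walk cannot return to the same node with
the opposite direction tag. -/
lemma pal {k : ℕ} {s0 h : TriNode n m l × Bool × Fin 2}
    (hk : iter D D' k s0 = some h) (hnode : h.1 = s0.1)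
    (htag : h.2.1 = ! s0.2.1) : False := by
  classical
  obtain ⟨p0, tg0, e0⟩ := s0
  obtain ⟨p1, tg1, e1⟩ := h
  have hnode' : p0 = p1 := hnode.symm
  have htag' : tg1 = ! tg0 := htag
  subst hnode'
  subst htag'
  have hsome : ∀ i, ∃ x, (i ≤ k → iter D D' i (p0, tg0, e0) = some x) := by
    intro i
    by_cases hi : i ≤ k
    · obtain ⟨j, rfl⟩ := Nat.exists_eq_add_of_le hi
      rw [iter_add] at hk
      rcases hx : iter D D' i (p0, tg0, e0) with _ | x
      · rw [hx] at hk; simp at hk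
      · exact ⟨x, fun _ => rfl⟩
    · exact ⟨(p0, tg0, e0), fun hh => absurd hh hi⟩
  choose sf hsf using hsome
  have hsk : sf k = (p0, ! tg0, e1) := by
    have h1 := (hsf k le_rfl).symm.trans hk
    exact Option.some_injective _ h1
  have hstep : ∀ i, i < k → step D D' (sf i) = some (sf (i + 1)) := by
    intro i hi
    have h2 := hsf (i + 1) hi
    rw [iter_succ', hsf i (le_of_lt hi)] at h2
    simpa using h2
  have hflp : flp (p0, ! tg0, e1) = shf (e0 + e1) (p0, tg0, e0) := by
    simp [flp, shf, Prod.ext_iff]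
    exact (f2_absorb e0 e1).symm
  have hrev : ∀ i, i ≤ k → iter D D' i (flp (p0, ! tg0, e1)) = some (flp (sf (k - i))) := by
    intro i
    induction i with
    | zero => intro _; simp [iter, hsk]
    | succ i ih =>
        intro hi
        have hi' : i ≤ k := by omega
        rw [iter_succ', ih hi']
        simp only [Option.bind_some]
        rw [show k - i = k - (i + 1) + 1 from by omega]
        exact step_rev D D' (hstep _ (by omega))
  have hshf : ∀ i, i ≤ k → iter D D' i (flp (p0, ! tg0, e1)) = some (shf (e0 + e1) (sf i)) := by
    intro i hi
    rw [hflp, iter_shf, hsf i hi]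
    rfl
  have hcomb : ∀ i, i ≤ k → flp (sf (k - i)) = shf (e0 + e1) (sf i) := by
    intro i hi
    exact Option.some_injective _ ((hrev i hi).symm.trans (hshf i hi))
  rcases Nat.even_or_odd k with ⟨i, hke⟩ | ⟨i, hko⟩
  · have h1 := hcomb i (by omega)
    rw [show k - i = i from by omega] at h1
    have h2 := congrArg (fun s : TriNode n m l × Bool × Fin 2 => s.2.1) h1
    simp [flp, shf] at h2
  · have h1 := hcomb i (by omega)
    rw [show k - i = i + 1 from by omega] at h1
    have h2 := congrArg (fun s : TriNode n m l × Bool × Fin 2 => s.1) h1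
    simp only [flp, shf] at h2
    exact step_ne D D' (hstep i (by omega)) h2

/-! ### halting of the walk when no closed loops occur -/

lemma exists_halt (hz : zeta D D' = 0) (s0 : TriNode n m l × Bool × Fin 2) :
    ∃ k h, iter D D' k s0 = some h ∧ step D D' h = none := by
  classical
  by_contra hcon
  push_neg at hcon
  have hall : ∀ i, ∃ x, iter D D' i s0 = some x := by
    intro i
    induction i with
    | zero => exact ⟨s0, rfl⟩
    | succ i ih =>
        obtain ⟨x, hx⟩ := ih
        rcases hy : step D D' x with _ | y
        · exact absurd hy (hcon i x hx)
        · refine ⟨y, ?_⟩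
          rw [iter_succ', hx]
          simpa using hy
  choose sf hsf using hall
  have hstep : ∀ i, step D D' (sf i) = some (sf (i + 1)) := by
    intro i
    have h2 := hsf (i + 1)
    rw [iter_succ', hsf i] at h2
    simpa using h2
  obtain ⟨a, b, hl, heq⟩ : ∃ a b, a < b ∧ sf a = sf b := by
    obtain ⟨x, y, hxy, he⟩ := Finite.exists_ne_map_eq_of_infinite sf
    rcases Nat.lt_or_ge x y with hxy' | hxy'
    · exact ⟨x, y, hxy', he⟩
    · exact ⟨y, x, by omega, he.symm⟩
  have key : ∀ d, d ≤ a → sf (a - d) = sf (a - d + (b - a)) := by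
    intro d
    induction d with
    | zero =>
        intro _
        simpa [Nat.add_sub_cancel' hl.le] using heq
    | succ d ihd =>
        intro hd
        have hd' : d ≤ a := by omega
        have hprev := ihd hd'
        rw [show a - d = (a - (d + 1)) + 1 from by omega] at hprev
        rw [show a - (d + 1) + 1 + (b - a) = (a - (d + 1) + (b - a)) + 1 from by omega] at hprev
        have h3 := hstep (a - (d + 1) + (b - a))
        rw [← hprev] at h3
        exact step_inj D D' (hstep _) h3
  have hTeq : sf 0 = sf (b - a) := by simpa using key a le_rfl
  have hpred : ∀ i, ∃ j, step D D' (sf j) = some (sf i) := by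
    intro i
    rcases i with _ | i
    · refine ⟨b - a - 1, ?_⟩
      have h4 := hstep (b - a - 1)
      rw [show b - a - 1 + 1 = b - a from by omega] at h4
      rw [h4, ← hTeq]
    · exact ⟨i, hstep i⟩
  have hmid : ∀ i, IsMiddle (sf i).1 := by
    intro i
    rcases h' : sf i with ⟨p, tag, e⟩
    rcases p with i0 | (j0 | k0)
    · -- top node
      cases tag
      · have h5 := hstep i
        rw [h'] at h5
        simp [step, dS, toDown] at h5
      · obtain ⟨j, hj⟩ := hpred i
        rw [h'] at hj
        rcases hsj : sf j with ⟨pj, tagj, ej⟩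
        rw [hsj] at hj
        rcases step_eq_some D D' hj with ⟨-, htg, -, -⟩ | ⟨-, -, hd, -⟩
        · simp at htg
        · rcases (dS_eq_some D').mp hd with ⟨aa, -, hq⟩
          exact absurd hq (by cases D'.pair aa <;> simp [inDown])
    · exact trivial
    · -- bottom node
      cases tag
      · obtain ⟨j, hj⟩ := hpred i
        rw [h'] at hj
        rcases hsj : sf j with ⟨pj, tagj, ej⟩
        rw [hsj] at hj
        rcases step_eq_some D D' hj with ⟨-, -, hd, -⟩ | ⟨-, htg, -, -⟩
        · rcases (dN_eq_some D).mp hd with ⟨aa, -, hq⟩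
          exact absurd hq (by cases D.pair aa <;> simp [inUp])
        · simp at htg
      · have h5 := hstep i
        rw [h'] at h5
        simp [step, dN, toUp] at h5
  have hclosed : ∀ p q, (∃ i, (sf i).1 = p) → Linked D D' p q → ∃ i, (sf i).1 = q := by
    rintro p q ⟨i, hip⟩ hL
    rcases hsi : sf i with ⟨p0, tag, e⟩
    rw [hsi] at hip
    obtain rfl : p0 = p := hip
    rcases (linked_iff D D').mp hL with hd | hd
    · cases tag
      · obtain ⟨j, hj⟩ := hpred i
        rw [hsi] at hj
        rcases hsj : sf j with ⟨pj, tagj, ej⟩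
        rw [hsj] at hj
        rcases step_eq_some D D' hj with ⟨-, -, hdj, -⟩ | ⟨-, htg, -, -⟩
        · have h6 := dN_symm D hdj
          rw [hd] at h6
          obtain rfl : q = pj := Option.some_injective _ h6
          exact ⟨j, by rw [hsj]⟩
        · simp at htg
      · have hs := hstep i
        rw [hsi, step_true D D' hd] at hs
        have h7 := Option.some_injective _ hs
        exact ⟨i + 1, by rw [← h7]⟩
    · cases tag
      · have hs := hstep i
        rw [hsi, step_false D D' hd] at hs
        have h7 := Option.some_injective _ hs
        exact ⟨i + 1, by rw [← h7]⟩
      · obtain ⟨j, hj⟩ := hpred i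
        rw [hsi] at hj
        rcases hsj : sf j with ⟨pj, tagj, ej⟩
        rw [hsj] at hj
        rcases step_eq_some D D' hj with ⟨-, htg, -, -⟩ | ⟨-, -, hdj, -⟩
        · simp at htg
        · have h6 := dS_symm D' hdj
          rw [hd] at h6
          obtain rfl : q = pj := Option.some_injective _ h6
          exact ⟨j, by rw [hsj]⟩
  have hsymm : Symmetric (Linked D D') := fun _ _ hh => linked_symm D D' hh
  have hprop : ∀ v, Relation.ReflTransGen (Linked D D') (sf 0).1 v → ∃ i, (sf i).1 = v := by
    intro v hR
    induction hR with
    | refl => exact ⟨0, rfl⟩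
    | tail _ hL ih =>
        obtain ⟨i, hi⟩ := ih
        exact hclosed _ _ ⟨i, hi⟩ hL
  have hfin : Finite (Quot (Linked D D')) :=
    Finite.of_surjective (Quot.mk _) Quot.mk_surjective
  have hne : Nonempty {c : Quot (Linked D D') // ∀ v, Quot.mk (Linked D D') v = c → IsMiddle v} := by
    refine ⟨⟨Quot.mk _ (sf 0).1, ?_⟩⟩
    intro v hv
    have hEq : Relation.EqvGen (Linked D D') v (sf 0).1 := Quot.eq.mp hv
    have hRT : Relation.ReflTransGen (Linked D D') (sf 0).1 v :=
      haveI : Std.Symm (Linked D D') := ⟨fun _ _ hh => hsymm hh⟩; Std.Symm.symm (r := ReflTransGen (Linked D D')) _ _ (eqvGen_to_rtg hsymm hEq)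
    obtain ⟨i, hi⟩ := hprop v hRT
    rw [← hi]
    exact hmid i
  rw [zeta, Nat.card_eq_zero] at hz
  rcases hz with hz | hz
  · exact hz.false hne.some
  · haveI := hfin
    haveI : Finite {c : Quot (Linked D D') // ∀ v, Quot.mk (Linked D D') v = c → IsMiddle v} :=
      Subtype.finite
    exact absurd this hz.not_finite
/-! ### capture of lifted connectivity by the deterministic walk -/

def tagOf : TriNode n m l → Bool
  | Sum.inl _ => true
  | _ => false

lemma not_middle_cases {p : TriNode n m l} (hp : ¬ IsMiddle p) :
    (∃ i : Fin n, p = Sum.inl i) ∨ (∃ k : Fin l, p = Sum.inr (Sum.inr k)) := by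
  rcases p with i | (j | k)
  · exact Or.inl ⟨i, rfl⟩
  · exact absurd trivial hp
  · exact Or.inr ⟨k, rfl⟩

lemma J2_to_iter {p : TriNode n m l} (hp : ¬ IsMiddle p) (c : Fin 2)
    {s : TriNode n m l × Fin 2} (h : J2 D D' (p, c) s) :
    ∃ k tag, iter D D' k (p, tagOf p, c) = some (s.1, tag, s.2) := by
  induction h with
  | refl => exact ⟨0, tagOf p, rfl⟩
  | @tail bb cc hab hL ih =>
      obtain ⟨r, e⟩ := bb
      obtain ⟨r', e'⟩ := cc
      obtain ⟨k, tag, hk⟩ := ih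
      obtain ⟨hLrr, hle⟩ := hL
      have hle' : e' = e + sgn r r' := hle
      rcases (linked_iff D D').mp hLrr with hd | hd
      · cases tag
        · -- arrived with tag `false`; the `dN`-edge was the incoming one
          rcases k with _ | k
          · have h0 : (p, tagOf p, c) = (r, false, e) := Option.some_injective _ hk
            obtain ⟨rfl, htg, rfl⟩ : p = r ∧ tagOf p = false ∧ c = e := by
              simpa [Prod.ext_iff] using h0
            rcases not_middle_cases hp with ⟨i, rfl⟩ | ⟨kk, rfl⟩
            · simp [tagOf] at htg
            · simp [dN, toUp] at hd
          · rw [iter_succ'] at hk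
            rcases hx : iter D D' k (p, tagOf p, c) with _ | x
            · rw [hx] at hk; simp at hk
            · rw [hx] at hk
              simp only [Option.bind_some] at hk
              obtain ⟨px, tagx, ex⟩ := x
              rcases step_eq_some D D' hk with ⟨htagx, -, hdx, hlx⟩ | ⟨-, htg, -, -⟩
              · have h6 := dN_symm D hdx
                rw [hd] at h6
                obtain rfl : r' = px := Option.some_injective _ h6
                have hex : ex = e' := by
                  have h7 : ex = e + sgn r' r := by
                    rw [hlx]
                    exact (f2_cancel ex _).symm
                  rw [h7, sgn_symm r' r]
                  exact hle'.symm
                refine ⟨k, tagx, ?_⟩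
                rw [hx, hex]
              · simp at htg
        · -- leave along the `dN`-edge
          refine ⟨k + 1, false, ?_⟩
          rw [iter_succ', hk]
          simp only [Option.bind_some]
          rw [step_true D D' hd, hle']
      · cases tag
        · refine ⟨k + 1, true, ?_⟩
          rw [iter_succ', hk]
          simp only [Option.bind_some]
          rw [step_false D D' hd, hle']
        · rcases k with _ | k
          · have h0 : (p, tagOf p, c) = (r, true, e) := Option.some_injective _ hk
            obtain ⟨rfl, htg, rfl⟩ : p = r ∧ tagOf p = true ∧ c = e := by
              simpa [Prod.ext_iff] using h0
            rcases not_middle_cases hp with ⟨i, rfl⟩ | ⟨kk, rfl⟩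
            · simp [dS, toDown] at hd
            · simp [tagOf] at htg
          · rw [iter_succ'] at hk
            rcases hx : iter D D' k (p, tagOf p, c) with _ | x
            · rw [hx] at hk; simp at hk
            · rw [hx] at hk
              simp only [Option.bind_some] at hk
              obtain ⟨px, tagx, ex⟩ := x
              rcases step_eq_some D D' hk with ⟨-, htg, -, -⟩ | ⟨htagx, -, hdx, hlx⟩
              · simp at htg
              · have h6 := dS_symm D' hdx
                rw [hd] at h6
                obtain rfl : r' = px := Option.some_injective _ h6
                have hex : ex = e' := by
                  have h7 : ex = e + sgn r' r := by
                    rw [hlx]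
                    exact (f2_cancel ex _).symm
                  rw [h7, sgn_symm r' r]
                  exact hle'.symm
                refine ⟨k, tagx, ?_⟩
                rw [hx, hex]

/-! ### reach between outer nodes -/

lemma outer_reach {p q : TriNode n m l} {c d : Fin 2}
    (hp : ¬ IsMiddle p) (hq : ¬ IsMiddle q) (h : J2 D D' (p, c) (q, d)) :
    (q = p ∧ d = c) ∨ (q ≠ p ∧ d = c + sgn p q) := by
  obtain ⟨k, tag, hk⟩ := J2_to_iter D D' hp c (s := (q, d)) h
  rcases k with _ | k
  · left
    have h0 : (p, tagOf p, c) = (q, tag, d) := Option.some_injective _ hk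
    obtain ⟨rfl, -, rfl⟩ : p = q ∧ tagOf p = tag ∧ c = d := by
      simpa [Prod.ext_iff] using h0
    exact ⟨rfl, rfl⟩
  · right
    have hk0 := hk
    rw [iter_succ'] at hk
    rcases hx : iter D D' k (p, tagOf p, c) with _ | x
    · rw [hx] at hk; simp at hk
    · rw [hx] at hk
      simp only [Option.bind_some] at hk
      obtain ⟨px, tagx, ex⟩ := x
      have hqtag : ((∃ i : Fin n, q = Sum.inl i) ∧ tag = false) ∨
          ((∃ kk : Fin l, q = Sum.inr (Sum.inr kk)) ∧ tag = true) := by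
        rcases step_eq_some D D' hk with ⟨-, htg, hdx, -⟩ | ⟨-, htg, hdx, -⟩
        · -- arrived via dN : q = inUp _
          rcases (dN_eq_some D).mp hdx with ⟨aa, -, hq'⟩
          rcases not_middle_cases hq with ⟨i, rfl⟩ | ⟨kk, rfl⟩
          · exact Or.inl ⟨⟨i, rfl⟩, htg⟩
          · exact absurd hq' (by cases D.pair aa <;> simp [inUp])
        · rcases (dS_eq_some D').mp hdx with ⟨aa, -, hq'⟩
          rcases not_middle_cases hq with ⟨i, rfl⟩ | ⟨kk, rfl⟩
          · exact absurd hq' (by cases D'.pair aa <;> simp [inDown])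
          · exact Or.inr ⟨⟨kk, rfl⟩, htg⟩
      have hpinv := iter_pinv D D' hk0
      constructor
      · -- q ≠ p via the palindrome lemma
        intro hqp
        apply pal D D' hk0 (by rw [hqp])
        rcases hqtag with ⟨⟨i, rfl⟩, rfl⟩ | ⟨⟨kk, rfl⟩, rfl⟩
        · rw [← hqp]; rfl
        · rw [← hqp]; rfl
      · -- parity
        rcases hqtag with ⟨⟨i, rfl⟩, rfl⟩ | ⟨⟨kk, rfl⟩, rfl⟩ <;>
            rcases not_middle_cases hp with ⟨i', rfl⟩ | ⟨kk', rfl⟩ <;>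
            simp [pinv, lvlp, lvl, tagOf] at hpinv <;>
            simp [sgn, lvl] <;>
            first
              | (rw [← hpinv]; exact (f2_cancel _ 1).symm)
              | exact hpinv
  
/-! ### compatibility transport -/

def Compat (g : TriNode n m l → Fin 2) : Prop :=
  ∀ p q : TriNode n m l, Linked D D' p q → g q = g p + sgn p q

lemma compat_J2 {g : TriNode n m l → Fin 2} (hg : Compat D D' g)
    {s t : TriNode n m l × Fin 2} (h : J2 D D' s t) (hs : s.2 = g s.1) :
    t.2 = g t.1 := by
  induction h with
  | refl => exact hs
  | tail _ hL ih => rw [hL.2, ih, ← hg _ _ hL.1]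

lemma compat_lift {g : TriNode n m l → Fin 2} (hg : Compat D D' g)
    {p q : TriNode n m l} (h : Joined D D' p q) :
    J2 D D' (p, g p) (q, g q) := by
  induction h with
  | refl => exact ReflTransGen.refl
  | tail _ hL ih => exact ReflTransGen.tail ih ⟨hL, hg _ _ hL⟩
/-! ### masks of diagram matrices -/

/-- Sign of an edge of a diagram: `1` for same-side (cup/cap), `0` for through. -/
def esgn {a b : ℕ} (x y : TLNode a b) : Fin 2 := if x.isLeft = y.isLeft then 1 else 0

/-- The mask (non-vanishing pattern) of `Rmat`. -/
def DMask {a b : ℕ} (E : TLDiagram a b) (v : Fin a → Fin 2) (w : Fin b → Fin 2) : Prop :=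
  ∀ x, Sum.elim v w (E.pair x) = Sum.elim v w x + esgn x (E.pair x)

lemma xfac_ne_zero_iff {K : Type*} [CommRing K] [IsDomain K] (x : Kˣ) (a b : Fin 2) :
    xfac x a b ≠ 0 ↔ a ≠ b := by
  by_cases h : a = b
  · simp [xfac, h]
  · by_cases h2 : b < a <;> simp [xfac, h, h2, Units.ne_zero]

lemma Rmat_ne_zero_iff {K : Type*} [CommRing K] [IsDomain K] (x : Kˣ) {a b : ℕ}
    (E : TLDiagram a b) (v : Fin a → Fin 2) (w : Fin b → Fin 2) :
    Rmat x E v w ≠ 0 ↔ DMask E v w := by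
  rw [Rmat, mul_ne_zero_iff, mul_ne_zero_iff,
    Finset.prod_ne_zero_iff, Finset.prod_ne_zero_iff, Finset.prod_ne_zero_iff]
  constructor
  · rintro ⟨⟨hA, hB⟩, hC⟩ xx
    rcases xx with i | j
    · rcases hpair : E.pair (Sum.inl i) with j' | j'
      · have hne : v i ≠ v j' := by
          rcases lt_trichotomy i j' with hij | hij | hij
          · have := hA (i, j') (Finset.mem_filter.mpr ⟨Finset.mem_univ _, hij, hpair⟩)
            exact (xfac_ne_zero_iff x _ _).mp this
          · exfalso; rw [hij] at hpair; exact E.fixedFree _ hpair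
          · have hp2 : E.pair (Sum.inl j') = Sum.inl i := by
              have h9 := E.involutive (Sum.inl i); rw [hpair] at h9; exact h9
            have := hA (j', i) (Finset.mem_filter.mpr ⟨Finset.mem_univ _, hij, hp2⟩)
            exact fun hvv => (xfac_ne_zero_iff x _ _).mp this hvv.symm
        simp only [Sum.elim_inl, esgn, Sum.isLeft_inl, if_pos rfl]
        exact (f2_ne_iff _ _).mp hne
      · have := hB (i, j') (Finset.mem_filter.mpr ⟨Finset.mem_univ _, hpair⟩)
        have hv : v i = w j' := by
          by_contra hvv; exact this (if_neg hvv)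
        simp only [Sum.elim_inr, Sum.elim_inl, esgn, Sum.isLeft_inl, Sum.isLeft_inr]
        simp [hv.symm]
    · rcases hpair : E.pair (Sum.inr j) with j' | j'
      · have hp2 : E.pair (Sum.inl j') = Sum.inr j := by
          have h9 := E.involutive (Sum.inr j); rw [hpair] at h9; exact h9
        have := hB (j', j) (Finset.mem_filter.mpr ⟨Finset.mem_univ _, hp2⟩)
        have hv : v j' = w j := by
          by_contra hvv; exact this (if_neg hvv)
        simp only [Sum.elim_inr, Sum.elim_inl, esgn, Sum.isLeft_inl, Sum.isLeft_inr]
        simp [hv]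
      · have hne : w j ≠ w j' := by
          rcases lt_trichotomy j j' with hij | hij | hij
          · have := hC (j, j') (Finset.mem_filter.mpr ⟨Finset.mem_univ _, hij, hpair⟩)
            exact (xfac_ne_zero_iff x _ _).mp this
          · exfalso; rw [hij] at hpair; exact E.fixedFree _ hpair
          · have hp2 : E.pair (Sum.inr j') = Sum.inr j := by
              have h9 := E.involutive (Sum.inr j); rw [hpair] at h9; exact h9
            have := hC (j', j) (Finset.mem_filter.mpr ⟨Finset.mem_univ _, hij, hp2⟩)
            exact fun hvv => (xfac_ne_zero_iff x _ _).mp this hvv.symm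
        simp only [Sum.elim_inr, esgn, Sum.isLeft_inr, if_pos rfl]
        exact (f2_ne_iff _ _).mp hne
  · intro hM
    refine ⟨⟨?_, ?_⟩, ?_⟩
    · intro pp hpp
      obtain ⟨-, hlt, hpair⟩ := Finset.mem_filter.mp hpp
      rw [xfac_ne_zero_iff]
      have h9 := hM (Sum.inl pp.1)
      rw [hpair] at h9
      simp only [Sum.elim_inl, esgn, Sum.isLeft_inl, if_pos rfl] at h9
      exact (f2_ne_iff _ _).mpr h9
    · intro pp hpp
      obtain ⟨-, hpair⟩ := Finset.mem_filter.mp hpp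
      have h9 := hM (Sum.inl pp.1)
      rw [hpair] at h9
      simp only [Sum.elim_inl, Sum.elim_inr, esgn, Sum.isLeft_inl, Sum.isLeft_inr] at h9
      simp at h9
      simp [h9]
    · intro pp hpp
      obtain ⟨-, hlt, hpair⟩ := Finset.mem_filter.mp hpp
      rw [xfac_ne_zero_iff]
      have h9 := hM (Sum.inr pp.1)
      rw [hpair] at h9
      simp only [Sum.elim_inr, esgn, Sum.isLeft_inr, if_pos rfl] at h9
      exact (f2_ne_iff _ _).mpr h9

/-! ### glued labellings -/

def gl (v : Fin n → Fin 2) (w : Fin m → Fin 2) (u : Fin l → Fin 2) : TriNode n m l → Fin 2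
  | Sum.inl i => v i
  | Sum.inr (Sum.inl j) => w j
  | Sum.inr (Sum.inr k) => u k

variable {v : Fin n → Fin 2} {w : Fin m → Fin 2} {u : Fin l → Fin 2}

lemma gl_inUp (a : TLNode n m) : gl v w u (inUp a) = Sum.elim v w a := by cases a <;> rfl

lemma gl_inDown (a : TLNode m l) : gl v w u (inDown a) = Sum.elim w u a := by cases a <;> rfl

lemma gl_inOut (a : TLNode n l) : gl v w u (inOut a) = Sum.elim v u a := by cases a <;> rfl

lemma sgn_inUp (a b : TLNode n m) :
    sgn (inUp a : TriNode n m l) (inUp b) = esgn a b := by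
  cases a <;> cases b <;> simp [sgn, lvl, inUp, esgn]

lemma sgn_inDown (a b : TLNode m l) :
    sgn (inDown a : TriNode n m l) (inDown b) = esgn a b := by
  cases a <;> cases b <;> simp [sgn, lvl, inDown, esgn]

lemma sgn_inOut (a b : TLNode n l) :
    sgn (inOut a : TriNode n m l) (inOut b) = esgn a b := by
  cases a <;> cases b <;> simp [sgn, lvl, inOut, esgn]

lemma inOut_not_middle (a : TLNode n l) : ¬ IsMiddle (inOut a : TriNode n m l) := by
  cases a <;> exact fun h => h

lemma inOut_injective : Function.Injective (inOut : TLNode n l → TriNode n m l) := by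
  intro a b h
  cases a <;> cases b <;> simp [inOut] at h <;> simp [h]

lemma exists_inOut {p : TriNode n m l} (hp : ¬ IsMiddle p) : ∃ a : TLNode n l, inOut a = p := by
  rcases not_middle_cases hp with ⟨i, rfl⟩ | ⟨k, rfl⟩
  · exact ⟨Sum.inl i, rfl⟩
  · exact ⟨Sum.inr k, rfl⟩

lemma compat_iff : (DMask D v w ∧ DMask D' w u) ↔ Compat D D' (gl v w u) := by
  constructor
  · rintro ⟨h1, h2⟩ p q hL
    rcases hL with ⟨a, rfl, rfl⟩ | ⟨a, rfl, rfl⟩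
    · rw [gl_inUp, gl_inUp, sgn_inUp]; exact h1 a
    · rw [gl_inDown, gl_inDown, sgn_inDown]; exact h2 a
  · intro hg
    constructor
    · intro a
      have h9 := hg (inUp a) (inUp (D.pair a)) (Or.inl ⟨a, rfl, rfl⟩)
      rwa [gl_inUp, gl_inUp, sgn_inUp] at h9
    · intro a
      have h9 := hg (inDown a) (inDown (D'.pair a)) (Or.inr ⟨a, rfl, rfl⟩)
      rwa [gl_inDown, gl_inDown, sgn_inDown] at h9

lemma maskE_of (E : TLDiagram n l) (hE : IsComposite D D' E)
    (hD : DMask D v w) (hD' : DMask D' w u) : DMask E v u := by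
  have hg : Compat D D' (gl v w u) := (compat_iff D D').mp ⟨hD, hD'⟩
  intro a
  obtain ⟨hne, hJ⟩ := (hE a (E.pair a)).mp rfl
  have hJ2 := compat_lift D D' hg hJ
  rcases outer_reach D D' (inOut_not_middle a) (inOut_not_middle (E.pair a)) hJ2 with
    ⟨heq, -⟩ | ⟨-, hrel⟩
  · exact absurd (inOut_injective heq).symm hne
  · rw [gl_inOut, gl_inOut, sgn_inOut] at hrel
    exact hrel
/-! ### construction of the middle word -/

def q0 (v : Fin n → Fin 2) (u : Fin l → Fin 2) : TriNode n m l → Fin 2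
  | Sum.inl i => v i
  | Sum.inr (Sum.inl _) => 0
  | Sum.inr (Sum.inr k) => u k

lemma q0_inOut (a : TLNode n l) : q0 v u (inOut a : TriNode n m l) = Sum.elim v u a := by cases a <;> rfl

/-- The set of lifted states reachable from some outer node with its letter. -/
def memA (v : Fin n → Fin 2) (u : Fin l → Fin 2) (r : TriNode n m l) (e : Fin 2) : Prop :=
  ∃ p, ¬ IsMiddle p ∧ J2 D D' (p, q0 v u p) (r, e)

variable (E : TLDiagram n l)

lemma outer_rel (hE : IsComposite D D' E) (hEm : DMask E v u) {p q : TriNode n m l}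
    (hp : ¬ IsMiddle p) (hq : ¬ IsMiddle q) (hne : p ≠ q) (hJ : Joined D D' p q) :
    q0 v u q = q0 v u p + sgn p q := by
  obtain ⟨a, rfl⟩ := exists_inOut hp
  obtain ⟨b, rfl⟩ := exists_inOut hq
  have hab : a ≠ b := fun h => hne (by rw [h])
  have hpair : E.pair a = b := (hE a b).mpr ⟨hab, hJ⟩
  have h9 := hEm a
  rw [hpair] at h9
  rw [q0_inOut, q0_inOut, sgn_inOut]
  exact h9

lemma memA_outer (hE : IsComposite D D' E) (hEm : DMask E v u) {r : TriNode n m l} {e : Fin 2}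
    (hr : ¬ IsMiddle r) (h : memA D D' v u r e) : e = q0 v u r := by
  obtain ⟨p, hp, hJ⟩ := h
  rcases outer_reach D D' hp hr hJ with ⟨rfl, rfl⟩ | ⟨hne, hrel⟩
  · rfl
  · rw [hrel]
    exact (outer_rel D D' E hE hEm hp hr (fun h' => hne h'.symm) (J2_proj D D' hJ)).symm

lemma memA_mid_unique (hE : IsComposite D D' E) (hEm : DMask E v u) {j : Fin m} {e e' : Fin 2}
    (h1 : memA D D' v u (Sum.inr (Sum.inl j)) e) (h2 : memA D D' v u (Sum.inr (Sum.inl j)) e') :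
    e = e' := by
  by_contra hne
  have he' : e' = e + 1 := (f2_ne_iff e e').mp hne
  obtain ⟨p, hp, hJ⟩ := h1
  obtain ⟨p', hp', hJ'⟩ := h2
  have hJ'' : J2 D D' (p', q0 v u p' + 1) (Sum.inr (Sum.inl j), e) := by
    have h9 := J2_shift D D' (t := 1) hJ'
    rwa [he', f2_cancel] at h9
  have hcomb : J2 D D' (p, q0 v u p) (p', q0 v u p' + 1) := hJ.trans (J2_symm D D' hJ'')
  rcases outer_reach D D' hp hp' hcomb with ⟨rfl, hrel⟩ | ⟨hne2, hrel⟩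
  · exact f2_succ_ne _ hrel
  · have h3 := outer_rel D D' E hE hEm hp hp' (fun hh => hne2 hh.symm) (J2_proj D D' hcomb)
    rw [← h3] at hrel
    exact f2_succ_ne _ hrel

lemma halt_not_middle {s : TriNode n m l × Bool × Fin 2} (hhalt : step D D' s = none) :
    ¬ IsMiddle s.1 := by
  obtain ⟨p, tag, e⟩ := s
  cases tag <;> rcases p with i | (j | k) <;>
    first
      | exact fun hh => hh
      | (exfalso; revert hhalt; simp [step, dS, dN, toDown, toUp])

lemma q0_gl_outer {p : TriNode n m l} (hp : ¬ IsMiddle p) (w' : Fin m → Fin 2) :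
    gl v w' u p = q0 v u p := by
  rcases not_middle_cases hp with ⟨i, rfl⟩ | ⟨k, rfl⟩ <;> rfl

lemma memA_of_compat (hz : zeta D D' = 0) (w' : Fin m → Fin 2)
    (hg' : Compat D D' (gl v w' u)) (j : Fin m) :
    memA D D' v u (Sum.inr (Sum.inl j)) (w' j) := by
  obtain ⟨k, h, hk, hhalt⟩ := exists_halt D D' hz (Sum.inr (Sum.inl j), true, w' j)
  have hout : ¬ IsMiddle h.1 := halt_not_middle D D' hhalt
  have hJ := iter_J2 D D' hk
  have heq : h.2.2 = gl v w' u h.1 := compat_J2 D D' hg' hJ rfl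
  refine ⟨h.1, hout, ?_⟩
  rw [← q0_gl_outer hout w', ← heq]
  exact J2_symm D D' hJ

lemma memA_mid_exists (hz : zeta D D' = 0) (v : Fin n → Fin 2) (u : Fin l → Fin 2) (j : Fin m) :
    ∃ e, memA D D' v u (Sum.inr (Sum.inl j)) e := by
  obtain ⟨k, h, hk, hhalt⟩ := exists_halt D D' hz (Sum.inr (Sum.inl j), true, 0)
  have hout : ¬ IsMiddle h.1 := halt_not_middle D D' hhalt
  have hJ := iter_J2 D D' hk
  refine ⟨0 + (h.2.2 + q0 v u h.1), h.1, hout, ?_⟩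
  have h9 := J2_shift D D' (t := h.2.2 + q0 v u h.1) (J2_symm D D' hJ)
  rwa [f2_absorb] at h9

lemma exists_unique_mask (hE : IsComposite D D' E) (hz : zeta D D' = 0)
    (hEm : DMask E v u) : ∃! w : Fin m → Fin 2, DMask D v w ∧ DMask D' w u := by
  classical
  choose wfn hwfn using memA_mid_exists D D' hz v u
  have hmemg : ∀ r : TriNode n m l, memA D D' v u r (gl v wfn u r) := by
    intro r
    rcases r with i | (j | k)
    · exact ⟨Sum.inl i, fun hh => hh, ReflTransGen.refl⟩
    · exact hwfn j
    · exact ⟨Sum.inr (Sum.inr k), fun hh => hh, ReflTransGen.refl⟩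
  have hcompat : Compat D D' (gl v wfn u) := by
    intro p q hL
    have h1 : memA D D' v u q (gl v wfn u p + sgn p q) := by
      obtain ⟨pp, hpp, hJ⟩ := hmemg p
      exact ⟨pp, hpp, hJ.tail ⟨hL, rfl⟩⟩
    have h2 := hmemg q
    rcases q with i | (j | k)
    · have hqo : ¬ IsMiddle (Sum.inl i : TriNode n m l) := fun hh => hh
      exact (memA_outer D D' E hE hEm hqo h2).trans (memA_outer D D' E hE hEm hqo h1).symm
    · exact memA_mid_unique D D' E hE hEm h2 h1
    · have hqo : ¬ IsMiddle (Sum.inr (Sum.inr k) : TriNode n m l) := fun hh => hh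
      exact (memA_outer D D' E hE hEm hqo h2).trans (memA_outer D D' E hE hEm hqo h1).symm
  refine ⟨wfn, (compat_iff D D').mpr hcompat, ?_⟩
  intro w' hw'
  have hg' : Compat D D' (gl v w' u) := (compat_iff D D').mp hw'
  funext j
  exact memA_mid_unique D D' E hE hEm
    (memA_of_compat D D' hz w' hg' j) (hwfn j)
end Statement2Aux

/-- Over an integral domain, if no closed loops arise in the
concatenation of `D` and `D'`, `X ∈ [R_q(D)]` and `Y ∈ [R_q(D')]`, then
`XY ∈ [R_q(D∘D')]`. -/
theorem statement2 {K : Type*} [CommRing K] [IsDomain K] (x : Kˣ) {n m l : ℕ}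
    (D : TLDiagram n m) (D' : TLDiagram m l) (E : TLDiagram n l)
    (hE : IsComposite D D' E) (hz : zeta D D' = 0)
    (X : Matrix (Fin n → Fin 2) (Fin m → Fin 2) K)
    (Y : Matrix (Fin m → Fin 2) (Fin l → Fin 2) K)
    (hX : MaskEquiv X (Rmat x D)) (hY : MaskEquiv Y (Rmat x D')) :
    MaskEquiv (X * Y) (Rmat x E) := by
  classical
  have hXc : ∀ (vv : Fin n → Fin 2) (ww : Fin m → Fin 2), X vv ww ≠ 0 ↔ DMask D vv ww := by
    intro vv ww
    exact ⟨fun hx => (Rmat_ne_zero_iff x D vv ww).mp (fun h0 => hx ((hX vv ww).mpr h0)),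
      fun hd h0 => (Rmat_ne_zero_iff x D vv ww).mpr hd ((hX vv ww).mp h0)⟩
  have hYc : ∀ (ww : Fin m → Fin 2) (uu : Fin l → Fin 2), Y ww uu ≠ 0 ↔ DMask D' ww uu := by
    intro ww uu
    exact ⟨fun hy => (Rmat_ne_zero_iff x D' ww uu).mp (fun h0 => hy ((hY ww uu).mpr h0)),
      fun hd h0 => (Rmat_ne_zero_iff x D' ww uu).mpr hd ((hY ww uu).mp h0)⟩
  intro v u
  by_cases hEm : DMask E v u
  · obtain ⟨w0, hw0, huniq⟩ := exists_unique_mask D D' E hE hz hEm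
    have hx0 : X v w0 ≠ 0 := (hXc v w0).mpr hw0.1
    have hy0 : Y w0 u ≠ 0 := (hYc w0 u).mpr hw0.2
    have hsum : (X * Y) v u = X v w0 * Y w0 u := by
      rw [Matrix.mul_apply]
      apply Finset.sum_eq_single w0
      · intro b _ hb
        by_contra hprod
        obtain ⟨hbx, hby⟩ := mul_ne_zero_iff.mp hprod
        exact hb (huniq b ⟨(hXc v b).mp hbx, (hYc b u).mp hby⟩)
      · intro hw0m
        exact absurd (Finset.mem_univ w0) hw0m
    rw [hsum]
    exact iff_of_false (mul_ne_zero hx0 hy0)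
      (fun h0 => (Rmat_ne_zero_iff x E v u).mpr hEm h0)
  · have hall : ∀ ww ∈ (Finset.univ : Finset (Fin m → Fin 2)), X v ww * Y ww u = 0 := by
      intro ww _
      by_contra hprod
      obtain ⟨hbx, hby⟩ := mul_ne_zero_iff.mp hprod
      exact hEm (maskE_of D D' E hE ((hXc v ww).mp hbx) ((hYc ww u).mp hby))
    rw [Matrix.mul_apply, Finset.sum_eq_zero hall]
    have hr0 : Rmat x E v u = 0 := by
      by_contra h0
      exact hEm ((Rmat_ne_zero_iff x E v u).mp h0)
    simp [hr0]

end TLBlob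
end

section
/- The Temperley–Lieb algebra 𝒯_n is generated as a unital K-algebra by the diagrams 𝒰_1, 𝒰_2, …, 𝒰_{n−1}; in particular every diagram in D(n,n) can be expressed as a word in 1, 𝒰_1, …, 𝒰_{n−1}. -/
namespace TLBlob

/-- The diagrams expressible as words in `1, 𝒰_1, …, 𝒰_{n-1}` (with no closed
loops arising, so that the value in `𝒯_n` is the diagram itself). -/
inductive GenTL {n : ℕ} : TLDiagram n n → Prop
  | unit : ∀ E, IsId E → GenTL E
  | step : ∀ (i : ℕ) (U D E : TLDiagram n n), GenTL D → IsU i U →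
      IsComposite U D E → zeta U D = 0 → GenTL E

set_option linter.unusedSectionVars false

section Basics

variable {n : ℕ}

lemma nodePos_inl' (i : Fin n) : nodePos (Sum.inl i : TLNode n n) = (i : ℕ) := rfl

lemma nodePos_inr' (j : Fin n) : nodePos (Sum.inr j : TLNode n n) = n + n - 1 - (j : ℕ) := rfl

lemma nodePos_inj : Function.Injective (nodePos : TLNode n n → ℕ) := by
  intro v w h
  have h1 : ∀ (i j : Fin n), nodePos (Sum.inl i : TLNode n n) = nodePos (Sum.inr j : TLNode n n) → False := by
    intro i j hij
    have := i.isLt; have := j.isLt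
    rw [nodePos_inl', nodePos_inr'] at hij; omega
  cases v with
  | inl i =>
    cases w with
    | inl i' =>
      rw [nodePos_inl', nodePos_inl'] at h
      exact congrArg Sum.inl (Fin.ext h)
    | inr j => exact absurd h (fun hh => h1 i j hh)
  | inr j =>
    cases w with
    | inl i => exact absurd h.symm (fun hh => h1 i j hh)
    | inr j' =>
      have := j.isLt; have := j'.isLt
      rw [nodePos_inr', nodePos_inr'] at h
      exact congrArg Sum.inr (Fin.ext (by omega))

/-- horizontal coordinate of a node -/
def coordN : TLNode n n → ℕ
  | Sum.inl i => (i : ℕ)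
  | Sum.inr j => (j : ℕ)

/-- complexity measure: total horizontal displacement -/
noncomputable def mu (E : TLDiagram n n) : ℕ :=
  ∑ u : TLNode n n, Nat.dist (coordN u) (coordN (E.pair u))

lemma even_card_of_inv {α : Type*} [DecidableEq α] (s : Finset α) (f : α → α)
    (hmem : ∀ x ∈ s, f x ∈ s) (hinv : ∀ x ∈ s, f (f x) = x) (hne : ∀ x ∈ s, f x ≠ x) :
    Even s.card := by
  induction s using Finset.strongInduction with
  | _ s ih =>
    rcases s.eq_empty_or_nonempty with rfl | ⟨x, hx⟩
    · simp
    · have hfx : f x ∈ s := hmem x hx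
      have hfxx : f x ≠ x := hne x hx
      set s' := (s.erase x).erase (f x) with hs'
      have hxs' : x ∉ s' := by simp [hs', Finset.mem_erase]
      have hsub : s' ⊆ s := fun y hy =>
        Finset.mem_of_mem_erase (Finset.mem_of_mem_erase hy)
      have hss : s' ⊂ s := Finset.ssubset_iff_subset_ne.mpr
        ⟨hsub, fun hEq => hxs' (hEq ▸ hx)⟩
      have hmem' : ∀ y ∈ s', y ∈ s ∧ y ≠ x ∧ y ≠ f x := by
        intro y hy
        rw [hs', Finset.mem_erase, Finset.mem_erase] at hy
        exact ⟨hy.2.2, hy.2.1, hy.1⟩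
      have h1 : ∀ y ∈ s', f y ∈ s' := by
        intro y hy
        obtain ⟨hys, hyx, hyfx⟩ := hmem' y hy
        have hfy : f y ∈ s := hmem y hys
        have : f y ≠ f x := fun h => hyx (by rw [← hinv y hys, h, hinv x hx])
        have : f y ≠ x := fun h => hyfx (by rw [← hinv y hys, h])
        rw [hs', Finset.mem_erase, Finset.mem_erase]
        exact ⟨‹f y ≠ f x›, ‹f y ≠ x›, hfy⟩
      have h2 : Even s'.card :=
        ih s' hss (fun y hy => h1 y hy) (fun y hy => hinv y (hmem' y hy).1)
          (fun y hy => hne y (hmem' y hy).1)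
      have hcard1 : (s.erase x).card = s.card - 1 := Finset.card_erase_of_mem hx
      have hfx' : f x ∈ s.erase x := Finset.mem_erase.mpr ⟨hfxx, hfx⟩
      have hcard2 : s'.card = (s.erase x).card - 1 := Finset.card_erase_of_mem hfx'
      have hxpos : 0 < s.card := Finset.card_pos.mpr ⟨x, hx⟩
      have hfxpos : 0 < (s.erase x).card := Finset.card_pos.mpr ⟨f x, hfx'⟩
      obtain ⟨k, hk⟩ := h2
      exact ⟨k + 1, by omega⟩

lemma exists_adj_cup (E : TLDiagram n n)
    (hc : ∃ a b : Fin n, E.pair (Sum.inl a) = Sum.inl b) :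
    ∃ a b : Fin n, (b : ℕ) = (a : ℕ) + 1 ∧ E.pair (Sum.inl a) = Sum.inl b := by
  classical
  set T : Finset (Fin n × Fin n) :=
    Finset.univ.filter (fun p : Fin n × Fin n =>
      E.pair (Sum.inl p.1) = Sum.inl p.2 ∧ (p.1 : ℕ) < (p.2 : ℕ)) with hT
  have hTne : T.Nonempty := by
    obtain ⟨a, b, hab⟩ := hc
    have hne : a ≠ b := by
      intro h; subst h; exact E.fixedFree (Sum.inl a) hab
    rcases Nat.lt_or_ge (a : ℕ) (b : ℕ) with h | h
    · exact ⟨(a, b), by rw [hT]; exact Finset.mem_filter.mpr ⟨Finset.mem_univ _, hab, h⟩⟩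
    · have h' : (b : ℕ) < (a : ℕ) := by
        rcases Nat.lt_or_ge (b:ℕ) (a:ℕ) with h2 | h2
        · exact h2
        · exact absurd (Fin.ext (by omega) : a = b) hne
      have : E.pair (Sum.inl b) = Sum.inl a := by
        rw [← hab, E.involutive]
      exact ⟨(b, a), by rw [hT]; exact Finset.mem_filter.mpr ⟨Finset.mem_univ _, this, h'⟩⟩
  obtain ⟨p, hpT, hpmin⟩ := Finset.exists_min_image T (fun p => (p.2 : ℕ) - (p.1 : ℕ)) hTne
  obtain ⟨a, b⟩ := p
  rw [hT, Finset.mem_filter] at hpT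
  obtain ⟨-, hcup, hlt⟩ := hpT
  dsimp only at hcup hlt
  refine ⟨a, b, ?_, hcup⟩
  by_contra hne1
  have hlt2 : (a : ℕ) + 1 < (b : ℕ) := by omega
  have hblt := b.isLt
  have ha1 : (a : ℕ) + 1 < n := by omega
  have hcupb : E.pair (Sum.inl b) = Sum.inl a := by rw [← hcup, E.involutive]
  rcases hcm : E.pair (Sum.inl (⟨(a:ℕ)+1, ha1⟩ : Fin n)) with m | m
  case inl =>
    have hcc : E.pair (Sum.inl m) = Sum.inl (⟨(a:ℕ)+1, ha1⟩ : Fin n) := by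
      rw [← hcm, E.involutive]
    have hm1 : (m : ℕ) ≠ (a : ℕ) := by
      intro h
      have : m = a := Fin.ext h
      subst this
      rw [hcup] at hcc
      have := congrArg nodePos hcc
      rw [nodePos_inl', nodePos_inl'] at this
      simp only [Fin.val_mk] at this
      omega
    have hm2 : (m : ℕ) ≠ (a:ℕ)+1 := by
      intro h
      have hh : Sum.inl m = (Sum.inl (⟨(a:ℕ)+1, ha1⟩ : Fin n) : TLNode n n) :=
        congrArg Sum.inl (Fin.ext (by simpa using h))
      rw [hh] at hcc
      exact E.fixedFree _ hcc
    have hm3 : (m : ℕ) ≠ (b : ℕ) := by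
      intro h
      have : m = b := Fin.ext h
      subst this
      rw [hcupb] at hcc
      have := congrArg nodePos hcc
      rw [nodePos_inl', nodePos_inl'] at this
      simp only [Fin.val_mk] at this
      omega
    rcases Nat.lt_or_ge (m : ℕ) (a : ℕ) with h | h
    · -- m < a < a+1 < b : chords (m, a+1) and (a,b) interleave
      exact E.noncrossing (Sum.inl m) (Sum.inl a)
        (by rw [nodePos_inl', nodePos_inl']; omega)
        (by rw [nodePos_inl', hcc, nodePos_inl']; simp only [Fin.val_mk]; omega)
        (by rw [hcc, hcup, nodePos_inl', nodePos_inl']; simp only [Fin.val_mk]; omega)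
    · rcases Nat.lt_or_ge (m:ℕ) (b:ℕ) with h3 | h3
      · -- a+1 < m < b : smaller pair inside
        have hmem : ((⟨(a:ℕ)+1, ha1⟩ : Fin n), m) ∈ T := by
          rw [hT]
          refine Finset.mem_filter.mpr ⟨Finset.mem_univ _, hcm, ?_⟩
          simp only [Fin.val_mk]
          omega
        have := hpmin _ hmem
        dsimp only at this
        omega
      · -- a < a+1 < b < m : crossing
        exact E.noncrossing (Sum.inl a) (Sum.inl (⟨(a:ℕ)+1, ha1⟩ : Fin n))
          (by rw [nodePos_inl', nodePos_inl']; simp only [Fin.val_mk]; omega)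
          (by rw [nodePos_inl', hcup, nodePos_inl']; simp only [Fin.val_mk]; omega)
          (by rw [hcup, hcm, nodePos_inl', nodePos_inl']; omega)
  case inr =>
    have := m.isLt
    exact E.noncrossing (Sum.inl a) (Sum.inl (⟨(a:ℕ)+1, ha1⟩ : Fin n))
      (by rw [nodePos_inl', nodePos_inl']; simp only [Fin.val_mk]; omega)
      (by rw [nodePos_inl', hcup, nodePos_inl']; simp only [Fin.val_mk]; omega)
      (by rw [hcup, hcm, nodePos_inl', nodePos_inr']; omega)

end Basics

section FindQ

variable {n : ℕ}

lemma exists_q (E : TLDiagram n n) (a b : Fin n)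
    (hab : (b : ℕ) = (a : ℕ) + 1) (hcup : E.pair (Sum.inl a) = Sum.inl b) :
    ∃ q : TLNode n n,
      (b:ℕ) + 1 ≤ nodePos q ∧ nodePos q ≤ n + n - 1 - (b:ℕ) ∧
      (nodePos (E.pair q) + 2 ≤ (b:ℕ) ∨ n + n - (b:ℕ) ≤ nodePos (E.pair q)) ∧
      (∀ w : TLNode n n, (b:ℕ)+1 ≤ nodePos w → nodePos w < nodePos q →
        (b:ℕ)+1 ≤ nodePos (E.pair w) ∧ nodePos (E.pair w) ≤ n + n - 1 - (b:ℕ)) := by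
  classical
  have hbn := b.isLt
  have hcupb : E.pair (Sum.inl b) = Sum.inl a := by rw [← hcup, E.involutive]
  set i := (b : ℕ) with hi
  set B : Finset (TLNode n n) :=
    Finset.univ.filter (fun w => i + 1 ≤ nodePos w ∧ nodePos w ≤ n + n - 1 - i) with hB
  set Q : Finset (TLNode n n) :=
    B.filter (fun w => ¬(i ≤ nodePos (E.pair w) ∧ nodePos (E.pair w) ≤ n + n - 1 - i)) with hQ
  have hQne : Q.Nonempty := by
    by_contra hqe
    rw [Finset.not_nonempty_iff_eq_empty] at hqe
    have hstable : ∀ w ∈ B, E.pair w ∈ B := by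
      intro w hw
      have hwQ : w ∉ Q := by rw [hqe]; exact Finset.notMem_empty w
      rw [hQ, Finset.mem_filter] at hwQ
      have hA : i ≤ nodePos (E.pair w) ∧ nodePos (E.pair w) ≤ n + n - 1 - i := by
        by_contra hA; exact hwQ ⟨hw, hA⟩
      rw [hB, Finset.mem_filter] at hw ⊢
      refine ⟨Finset.mem_univ _, ?_, hA.2⟩
      rcases Nat.lt_or_ge i (nodePos (E.pair w)) with h | h
      · omega
      · exfalso
        have : nodePos (E.pair w) = i := by omega
        have : E.pair w = Sum.inl b := nodePos_inj (by rw [this, nodePos_inl'])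
        have : w = Sum.inl a := by rw [← hcupb, ← this, E.involutive]
        obtain ⟨-, hw1, hw2⟩ := hw
        rw [this, nodePos_inl'] at hw1
        omega
    have himg : B.image nodePos = Finset.Icc (i+1) (n + n - 1 - i) := by
      ext p
      simp only [Finset.mem_image, Finset.mem_Icc]
      constructor
      · rintro ⟨w, hw, rfl⟩
        rw [hB, Finset.mem_filter] at hw
        exact ⟨hw.2.1, hw.2.2⟩
      · rintro ⟨h1, h2⟩
        by_cases hp : p < n
        · refine ⟨Sum.inl ⟨p, hp⟩, ?_, by rw [nodePos_inl']⟩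
          rw [hB, Finset.mem_filter, nodePos_inl']
          exact ⟨Finset.mem_univ _, h1, h2⟩
        · have hpn : n ≤ p := by omega
          have hple : p ≤ n + n - 1 := by omega
          have hj : n + n - 1 - p < n := by omega
          refine ⟨Sum.inr ⟨n + n - 1 - p, hj⟩, ?_, by rw [nodePos_inr']; simp only [Fin.val_mk]; omega⟩
          rw [hB, Finset.mem_filter, nodePos_inr']
          simp only [Fin.val_mk]
          exact ⟨Finset.mem_univ _, by omega, by omega⟩
    have hcard : B.card = n + n - 1 - 2 * i := by
      have := Finset.card_image_of_injective B (nodePos_inj (n := n))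
      rw [himg] at this
      rw [← this, Nat.card_Icc]
      omega
    have heven : Even B.card :=
      even_card_of_inv B E.pair hstable (fun x _ => E.involutive x)
        (fun x _ => E.fixedFree x)
    obtain ⟨k, hk⟩ := heven
    omega
  obtain ⟨q, hqQ, hqmin⟩ := Finset.exists_min_image Q nodePos hQne
  rw [hQ, Finset.mem_filter, hB, Finset.mem_filter] at hqQ
  obtain ⟨⟨-, hq1, hq2⟩, hqA⟩ := hqQ
  refine ⟨q, hq1, hq2, ?_, ?_⟩
  · -- position of E.pair q
    have h1 : nodePos (E.pair q) ≠ i - 1 := by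
      intro h
      have : E.pair q = Sum.inl a := nodePos_inj (by rw [h, nodePos_inl']; omega)
      have : q = Sum.inl b := by rw [← hcup, ← this, E.involutive]
      rw [this, nodePos_inl'] at hq1
      omega
    have h2 : nodePos (E.pair q) ≠ i := by
      intro h
      have : E.pair q = Sum.inl b := nodePos_inj (by rw [h, nodePos_inl'])
      have : q = Sum.inl a := by rw [← hcupb, ← this, E.involutive]
      rw [this, nodePos_inl'] at hq1
      omega
    have h3 : ¬(i ≤ nodePos (E.pair q) ∧ nodePos (E.pair q) ≤ n + n - 1 - i) := hqA
    omega
  · intro w hw1 hw2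
    have hwB : w ∈ B := by
      rw [hB, Finset.mem_filter]
      exact ⟨Finset.mem_univ _, hw1, by omega⟩
    have hwQ : w ∉ Q := by
      intro hwQ
      have := hqmin w hwQ
      omega
    rw [hQ, Finset.mem_filter] at hwQ
    have hA : i ≤ nodePos (E.pair w) ∧ nodePos (E.pair w) ≤ n + n - 1 - i := by
      by_contra hA; exact hwQ ⟨hwB, hA⟩
    have : nodePos (E.pair w) ≠ i := by
      intro h
      have : E.pair w = Sum.inl b := nodePos_inj (by rw [h, nodePos_inl'])
      have : w = Sum.inl a := by rw [← hcupb, ← this, E.involutive]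
      rw [this, nodePos_inl'] at hw1
      omega
    omega

end FindQ

section Step

variable {n : ℕ}

def upair (a b : Fin n) : TLNode n n → TLNode n n
  | Sum.inl k => if k = a then Sum.inl b else if k = b then Sum.inl a else Sum.inr k
  | Sum.inr k => if k = a then Sum.inr b else if k = b then Sum.inr a else Sum.inl k

variable (a b : Fin n) (hab : (b : ℕ) = (a : ℕ) + 1)

include hab

lemma upair_inl_a : upair a b (Sum.inl a) = Sum.inl b := by simp [upair]

lemma upair_inl_b : upair a b (Sum.inl b) = Sum.inl a := by
  have : b ≠ a := by intro h; rw [h] at hab; omega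
  simp [upair, this]

lemma upair_inl_other (k : Fin n) (h1 : k ≠ a) (h2 : k ≠ b) :
    upair a b (Sum.inl k) = Sum.inr k := by simp [upair, h1, h2]

lemma upair_inr_a : upair a b (Sum.inr a) = Sum.inr b := by simp [upair]

lemma upair_inr_b : upair a b (Sum.inr b) = Sum.inr a := by
  have : b ≠ a := by intro h; rw [h] at hab; omega
  simp [upair, this]

lemma upair_inr_other (k : Fin n) (h1 : k ≠ a) (h2 : k ≠ b) :
    upair a b (Sum.inr k) = Sum.inl k := by simp [upair, h1, h2]

lemma upair_pos (x : TLNode n n) :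
    (nodePos x + nodePos (upair a b x) = n + n - 1) ∨
    (nodePos x = (a:ℕ) ∧ nodePos (upair a b x) = (a:ℕ)+1) ∨
    (nodePos x = (a:ℕ)+1 ∧ nodePos (upair a b x) = (a:ℕ)) ∨
    (nodePos x = n+n-2-(a:ℕ) ∧ nodePos (upair a b x) = n+n-1-(a:ℕ)) ∨
    (nodePos x = n+n-1-(a:ℕ) ∧ nodePos (upair a b x) = n+n-2-(a:ℕ)) := by
  have ha := a.isLt; have hb := b.isLt
  cases x with
  | inl k =>
    have hk := k.isLt
    by_cases h1 : k = a
    · rw [h1, upair_inl_a a b hab, nodePos_inl', nodePos_inl']; omega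
    · by_cases h2 : k = b
      · rw [h2, upair_inl_b a b hab, nodePos_inl', nodePos_inl']; omega
      · rw [upair_inl_other a b hab k h1 h2, nodePos_inl', nodePos_inr']; omega
  | inr k =>
    have hk := k.isLt
    by_cases h1 : k = a
    · rw [h1, upair_inr_a a b hab, nodePos_inr', nodePos_inr']; omega
    · by_cases h2 : k = b
      · rw [h2, upair_inr_b a b hab, nodePos_inr', nodePos_inr']; omega
      · rw [upair_inr_other a b hab k h1 h2, nodePos_inr', nodePos_inl']; omega

def Udiag : TLDiagram n n where
  pair := upair a b
  involutive := by
    have hba : b ≠ a := by intro h; rw [h] at hab; omega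
    have hab' : a ≠ b := fun h => hba h.symm
    intro u
    cases u with
    | inl k =>
      by_cases h1 : k = a
      · rw [h1, upair_inl_a a b hab, upair_inl_b a b hab]
      · by_cases h2 : k = b
        · rw [h2, upair_inl_b a b hab, upair_inl_a a b hab]
        · rw [upair_inl_other a b hab k h1 h2, upair_inr_other a b hab k h1 h2]
    | inr k =>
      by_cases h1 : k = a
      · rw [h1, upair_inr_a a b hab, upair_inr_b a b hab]
      · by_cases h2 : k = b
        · rw [h2, upair_inr_b a b hab, upair_inr_a a b hab]
        · rw [upair_inr_other a b hab k h1 h2, upair_inl_other a b hab k h1 h2]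
  fixedFree := by
    intro v h
    have ha := a.isLt
    have := upair_pos a b hab v
    rw [h] at this
    omega
  noncrossing := by
    intro v w h1 h2 h3
    have ha := a.isLt
    have hv := upair_pos a b hab v
    have hw := upair_pos a b hab w
    omega

end Step

section StepD

variable {n : ℕ}

/-- pairing of the rerouted diagram `D` with `E = U_b ∘ D`. -/
def dpair (E : TLDiagram n n) (a b : Fin n) (q : TLNode n n) : TLNode n n → TLNode n n :=
  fun u =>
    if u = Sum.inl b then q
    else if u = q then Sum.inl b
    else if u = Sum.inl a then E.pair q
    else if u = E.pair q then Sum.inl a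
    else E.pair u

variable (E : TLDiagram n n) (a b : Fin n) (q : TLNode n n)
  (hab : (b : ℕ) = (a : ℕ) + 1)
  (hcup : E.pair (Sum.inl a) = Sum.inl b)
  (hq1 : (b:ℕ) + 1 ≤ nodePos q)
  (hq2 : nodePos q ≤ n + n - 1 - (b:ℕ))
  (hp : nodePos (E.pair q) + 2 ≤ (b:ℕ) ∨ n + n - (b:ℕ) ≤ nodePos (E.pair q))
  (hmin : ∀ w : TLNode n n, (b:ℕ)+1 ≤ nodePos w → nodePos w < nodePos q →
      (b:ℕ)+1 ≤ nodePos (E.pair w) ∧ nodePos (E.pair w) ≤ n + n - 1 - (b:ℕ))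

include hab hcup hq1 hq2 hp hmin

lemma step_distinct :
    q ≠ Sum.inl b ∧ q ≠ Sum.inl a ∧ E.pair q ≠ Sum.inl b ∧ E.pair q ≠ Sum.inl a ∧
      E.pair q ≠ q ∧ (Sum.inl a : TLNode n n) ≠ Sum.inl b := by
  have hbn := b.isLt
  refine ⟨?_, ?_, ?_, ?_, E.fixedFree q, ?_⟩
  · intro h; rw [h, nodePos_inl'] at hq1; omega
  · intro h; rw [h, nodePos_inl'] at hq1; omega
  · intro h; rw [h, nodePos_inl'] at hp; omega
  · intro h; rw [h, nodePos_inl'] at hp; omega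
  · intro h
    have := congrArg nodePos h
    rw [nodePos_inl', nodePos_inl'] at this
    omega

omit hab hcup hq1 hq2 hp hmin in
lemma dpair_b : dpair E a b q (Sum.inl b) = q := by simp [dpair]

lemma dpair_q : dpair E a b q q = Sum.inl b := by
  obtain ⟨d1, -, -, -, d5, -⟩ := step_distinct E a b q hab hcup hq1 hq2 hp hmin
  simp [dpair, d1]

lemma dpair_a : dpair E a b q (Sum.inl a) = E.pair q := by
  obtain ⟨-, d2, -, -, -, d6⟩ := step_distinct E a b q hab hcup hq1 hq2 hp hmin
  have d2' : Sum.inl a ≠ q := fun h => d2 h.symm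
  simp [dpair, d6, d2']

lemma dpair_p : dpair E a b q (E.pair q) = Sum.inl a := by
  obtain ⟨-, -, d3, d4, d5, -⟩ := step_distinct E a b q hab hcup hq1 hq2 hp hmin
  simp [dpair, d3, d4, d5]

omit hab hcup hq1 hq2 hp hmin in
lemma dpair_other (u : TLNode n n) (h1 : u ≠ Sum.inl b) (h2 : u ≠ q)
    (h3 : u ≠ Sum.inl a) (h4 : u ≠ E.pair q) : dpair E a b q u = E.pair u := by
  simp [dpair, h1, h2, h3, h4]

lemma dpair_invol : Function.Involutive (dpair E a b q) := by
  intro u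
  obtain ⟨d1, d2, d3, d4, d5, d6⟩ := step_distinct E a b q hab hcup hq1 hq2 hp hmin
  have hcupb : E.pair (Sum.inl b) = Sum.inl a := by rw [← hcup, E.involutive]
  by_cases h1 : u = Sum.inl b
  · rw [h1, dpair_b E a b q, dpair_q E a b q hab hcup hq1 hq2 hp hmin]
  · by_cases h2 : u = q
    · rw [h2, dpair_q E a b q hab hcup hq1 hq2 hp hmin, dpair_b E a b q]
    · by_cases h3 : u = Sum.inl a
      · rw [h3, dpair_a E a b q hab hcup hq1 hq2 hp hmin,
          dpair_p E a b q hab hcup hq1 hq2 hp hmin]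
      · by_cases h4 : u = E.pair q
        · rw [h4, dpair_p E a b q hab hcup hq1 hq2 hp hmin,
            dpair_a E a b q hab hcup hq1 hq2 hp hmin]
        · rw [dpair_other E a b q u h1 h2 h3 h4]
          have e1 : E.pair u ≠ Sum.inl b := by
            intro h
            have : u = Sum.inl a := by rw [← hcupb, ← h, E.involutive]
            exact h3 this
          have e2 : E.pair u ≠ q := by
            intro h
            have : u = E.pair q := by rw [← h, E.involutive]
            exact h4 this
          have e3 : E.pair u ≠ Sum.inl a := by
            intro h
            have : u = Sum.inl b := by rw [← hcup, ← h, E.involutive]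
            exact h1 this
          have e4 : E.pair u ≠ E.pair q := by
            intro h
            exact h2 (E.involutive.injective h)
          rw [dpair_other E a b q (E.pair u) e1 e2 e3 e4, E.involutive]

lemma dpair_ff : ∀ v, dpair E a b q v ≠ v := by
  intro v h
  obtain ⟨d1, d2, d3, d4, d5, d6⟩ := step_distinct E a b q hab hcup hq1 hq2 hp hmin
  by_cases h1 : v = Sum.inl b
  · rw [h1, dpair_b E a b q] at h; exact d1 h
  · by_cases h2 : v = q
    · rw [h2, dpair_q E a b q hab hcup hq1 hq2 hp hmin] at h; exact d1 h.symm
    · by_cases h3 : v = Sum.inl a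
      · rw [h3, dpair_a E a b q hab hcup hq1 hq2 hp hmin] at h; exact d4 h
      · by_cases h4 : v = E.pair q
        · rw [h4, dpair_p E a b q hab hcup hq1 hq2 hp hmin] at h; exact d4 h.symm
        · rw [dpair_other E a b q v h1 h2 h3 h4] at h; exact E.fixedFree v h

lemma dpair_nc : ∀ v w : TLNode n n,
    nodePos v < nodePos w → nodePos w < nodePos (dpair E a b q v) →
    nodePos (dpair E a b q v) < nodePos (dpair E a b q w) → False := by
  intro v w h1 h2 h3
  obtain ⟨d1, d2, d3, d4, d5, d6⟩ := step_distinct E a b q hab hcup hq1 hq2 hp hmin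
  have hbn := b.isLt
  have hcupb : E.pair (Sum.inl b) = Sum.inl a := by rw [← hcup, E.involutive]
  have hqq : E.pair (E.pair q) = q := E.involutive q
  have hqq' : nodePos (E.pair (E.pair q)) = nodePos q := by rw [hqq]
  have hpc := hp
  by_cases hv1 : v = Sum.inl b
  · -- v is the top of the cup, dpair v = q
    rw [hv1, dpair_b E a b q] at h2 h3
    rw [hv1, nodePos_inl'] at h1
    -- w is generic
    have hw1 : w ≠ Sum.inl b := by
      intro h; rw [h, nodePos_inl'] at h1; omega
    have hw2 : w ≠ q := by
      intro h; rw [h] at h2; omega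
    have hw3 : w ≠ Sum.inl a := by
      intro h; rw [h, nodePos_inl'] at h1; omega
    have hw4 : w ≠ E.pair q := by
      intro h; rw [h] at h2 h1; omega
    rw [dpair_other E a b q w hw1 hw2 hw3 hw4] at h3
    have hmw := hmin w (by omega) h2
    rcases hpc with hp' | hp'
    · exact E.noncrossing (E.pair q) w (by omega) (by omega) (by omega)
    · exact E.noncrossing w q h2 h3 (by omega)
  · by_cases hv2 : v = q
    · rw [hv2, dpair_q E a b q hab hcup hq1 hq2 hp hmin, nodePos_inl'] at h2
      rw [hv2] at h1
      omega
    · by_cases hv3 : v = Sum.inl a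
      · -- v = inl a, dpair v = E.pair q
        rw [hv3, dpair_a E a b q hab hcup hq1 hq2 hp hmin] at h2 h3
        rw [hv3, nodePos_inl'] at h1
        rcases hpc with hp' | hp'
        · omega
        · -- E.pair q is far right
          by_cases hw1 : w = Sum.inl b
          · rw [hw1, dpair_b E a b q] at h3; omega
          · by_cases hw2 : w = q
            · rw [hw2, dpair_q E a b q hab hcup hq1 hq2 hp hmin, nodePos_inl'] at h3
              omega
            · by_cases hw4 : w = E.pair q
              · rw [hw4] at h2; omega
              · have hw3 : w ≠ Sum.inl a := by
                  intro h; rw [h, nodePos_inl'] at h1; omega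
                rw [dpair_other E a b q w hw1 hw2 hw3 hw4] at h3
                by_cases hwlt : nodePos w < nodePos q
                · have hwb : (b:ℕ) + 1 ≤ nodePos w := by
                    by_contra hh
                    have : nodePos w = (b:ℕ) := by omega
                    exact hw1 (nodePos_inj (by rw [this, nodePos_inl']))
                  have := hmin w hwb hwlt
                  omega
                · have hwgt : nodePos q < nodePos w := by
                    rcases Nat.lt_or_ge (nodePos q) (nodePos w) with h | h
                    · exact h
                    · exact absurd (nodePos_inj (by omega : nodePos w = nodePos q)) hw2
                  exact E.noncrossing q w hwgt h2 h3
      · by_cases hv4 : v = E.pair q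
        · rw [hv4, dpair_p E a b q hab hcup hq1 hq2 hp hmin, nodePos_inl'] at h2 h3
          rw [hv4] at h1
          rcases hpc with hp' | hp'
          · -- E.pair q on the left: pos w ∈ (pp, a), dpair w = E.pair w
            have hw1 : w ≠ Sum.inl b := by
              intro h; rw [h, nodePos_inl'] at h2; omega
            have hw2 : w ≠ q := by
              intro h; rw [h] at h2; omega
            have hw3 : w ≠ Sum.inl a := by
              intro h; rw [h, nodePos_inl'] at h2; omega
            have hw4 : w ≠ E.pair q := by
              intro h; rw [h] at h1; omega
            rw [dpair_other E a b q w hw1 hw2 hw3 hw4] at h3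
            -- E.pair w has position > a - ... = i-1; analyze
            by_cases hc1 : nodePos (E.pair w) = (b:ℕ)
            · have : E.pair w = Sum.inl b := nodePos_inj (by rw [hc1, nodePos_inl'])
              have : w = Sum.inl a := by rw [← hcupb, ← this, E.involutive]
              exact hw3 this
            · by_cases hc2 : nodePos (E.pair w) < nodePos q
              · have hwb : (b:ℕ) + 1 ≤ nodePos (E.pair w) := by omega
                have := hmin (E.pair w) hwb hc2
                rw [E.involutive] at this
                omega
              · by_cases hc3 : nodePos (E.pair w) = nodePos q
                · have : E.pair w = q := nodePos_inj hc3
                  have : w = E.pair q := by rw [← this, E.involutive]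
                  rw [this] at h1; omega
                · exact E.noncrossing (E.pair q) w (by omega) (by omega) (by omega)
          · omega
        · -- v generic: dpair v = E.pair v
          rw [dpair_other E a b q v hv1 hv2 hv3 hv4] at h2 h3
          by_cases hw1 : w = Sum.inl b
          · rw [hw1, dpair_b E a b q] at h3
            rw [hw1, nodePos_inl'] at h1 h2
            have hEvq : E.pair v ≠ q := by
              intro h; exact hv4 (by rw [← h, E.involutive])
            have hEvb : (b:ℕ)+1 ≤ nodePos (E.pair v) := by omega
            have := hmin (E.pair v) hEvb (by omega)
            rw [E.involutive] at this
            omega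
          · by_cases hw2 : w = q
            · rw [hw2, dpair_q E a b q hab hcup hq1 hq2 hp hmin, nodePos_inl'] at h3
              rw [hw2] at h1 h2
              omega
            · by_cases hw3 : w = Sum.inl a
              · rw [hw3, dpair_a E a b q hab hcup hq1 hq2 hp hmin] at h3
                rw [hw3, nodePos_inl'] at h1 h2
                rcases hpc with hp' | hp'
                · omega
                · have hEvb : E.pair v ≠ Sum.inl b := by
                    intro h
                    have : v = Sum.inl a := by rw [← hcupb, ← h, E.involutive]
                    exact hv3 this
                  have hEvq : E.pair v ≠ q := by
                    intro h; exact hv4 (by rw [← h, E.involutive])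
                  by_cases hc2 : nodePos (E.pair v) < nodePos q
                  · have hpos : nodePos (E.pair v) ≠ (b:ℕ) := by
                      intro h; exact hEvb (nodePos_inj (by rw [h, nodePos_inl']))
                    have hwb : (b:ℕ) + 1 ≤ nodePos (E.pair v) := by omega
                    have := hmin (E.pair v) hwb hc2
                    rw [E.involutive] at this
                    omega
                  · have hgt : nodePos q < nodePos (E.pair v) := by
                      rcases Nat.lt_or_ge (nodePos q) (nodePos (E.pair v)) with h | h
                      · exact h
                      · exact absurd (nodePos_inj (by omega : nodePos (E.pair v) = nodePos q)) hEvq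
                    exact E.noncrossing v q (by omega) hgt h3
              · by_cases hw4 : w = E.pair q
                · rw [hw4, dpair_p E a b q hab hcup hq1 hq2 hp hmin, nodePos_inl'] at h3
                  rw [hw4] at h1 h2
                  rcases hpc with hp' | hp'
                  · exact E.noncrossing v (E.pair q) h1 h2 (by omega)
                  · omega
                · rw [dpair_other E a b q w hw1 hw2 hw3 hw4] at h3
                  exact E.noncrossing v w h1 h2 h3

/-- the rerouted diagram `D` -/
def Ddiag : TLDiagram n n where
  pair := dpair E a b q
  involutive := dpair_invol E a b q hab hcup hq1 hq2 hp hmin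
  fixedFree := dpair_ff E a b q hab hcup hq1 hq2 hp hmin
  noncrossing := dpair_nc E a b q hab hcup hq1 hq2 hp hmin

omit hab hcup hq1 hq2 hp hmin in
lemma coordN_inl_eq (k : Fin n) : coordN (Sum.inl k : TLNode n n) = (k : ℕ) := rfl

omit hab hcup hq1 hq2 hp hmin in
lemma coordN_inr_eq (k : Fin n) : coordN (Sum.inr k : TLNode n n) = (k : ℕ) := rfl

omit hab hcup hq1 hq2 hp hmin in
lemma coordN_ge_of (x : TLNode n n) (m : ℕ) (h1 : m ≤ nodePos x)
    (h2 : nodePos x ≤ n + n - 1 - m) (hm : m < n) : m ≤ coordN x := by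
  cases x with
  | inl k => have := k.isLt; rw [nodePos_inl'] at h1 h2; rw [coordN_inl_eq]; omega
  | inr k => have := k.isLt; rw [nodePos_inr'] at h1 h2; rw [coordN_inr_eq]; omega

omit hab hcup hq1 hq2 hp hmin in
lemma coordN_le_of (x : TLNode n n) (m : ℕ)
    (h : nodePos x + 1 ≤ m ∨ n + n - m ≤ nodePos x) (hm : m < n) : coordN x + 1 ≤ m := by
  cases x with
  | inl k => have := k.isLt; rw [nodePos_inl'] at h; rw [coordN_inl_eq]; omega
  | inr k => have := k.isLt; rw [nodePos_inr'] at h; rw [coordN_inr_eq]; omega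

lemma mu_lt : mu (Ddiag E a b q hab hcup hq1 hq2 hp hmin) < mu E := by
  classical
  obtain ⟨d1, d2, d3, d4, d5, d6⟩ := step_distinct E a b q hab hcup hq1 hq2 hp hmin
  have hbn := b.isLt
  have hcupb : E.pair (Sum.inl b) = Sum.inl a := by rw [← hcup, E.involutive]
  have hqq : E.pair (E.pair q) = q := E.involutive q
  have hcq : (b:ℕ) ≤ coordN q := coordN_ge_of q (b:ℕ) (by omega) hq2 hbn
  have hcp : coordN (E.pair q) + 1 ≤ (b:ℕ) :=
    coordN_le_of (E.pair q) (b:ℕ) (by omega) hbn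
  set s : Finset (TLNode n n) :=
    insert (Sum.inl a) (insert (Sum.inl b) (insert q {E.pair q})) with hs
  have hsub : s ⊆ Finset.univ := Finset.subset_univ s
  have hDpair : ∀ u, (Ddiag E a b q hab hcup hq1 hq2 hp hmin).pair u = dpair E a b q u :=
    fun _ => rfl
  have heq : ∀ u ∈ Finset.univ \ s,
      Nat.dist (coordN u) (coordN ((Ddiag E a b q hab hcup hq1 hq2 hp hmin).pair u))
        = Nat.dist (coordN u) (coordN (E.pair u)) := by
    intro u hu
    rw [Finset.mem_sdiff, hs] at hu
    obtain ⟨-, hu⟩ := hu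
    simp only [Finset.mem_insert, Finset.mem_singleton] at hu
    push_neg at hu
    obtain ⟨e3, e1, e2, e4⟩ := hu
    rw [hDpair, dpair_other E a b q u e1 e2 e3 e4]
  have hm1 : (Sum.inl a : TLNode n n) ∉ insert (Sum.inl b) (insert q ({E.pair q} : Finset (TLNode n n))) := by
    simp only [Finset.mem_insert, Finset.mem_singleton]
    push_neg
    exact ⟨d6, fun h => d2 h.symm, fun h => d4 h.symm⟩
  have hm2 : (Sum.inl b : TLNode n n) ∉ insert q ({E.pair q} : Finset (TLNode n n)) := by
    simp only [Finset.mem_insert, Finset.mem_singleton]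
    push_neg
    exact ⟨fun h => d1 h.symm, fun h => d3 h.symm⟩
  have hm3 : q ∉ ({E.pair q} : Finset (TLNode n n)) := by
    simp only [Finset.mem_singleton]
    exact fun h => d5 h.symm
  have hlt : ∑ u ∈ s,
      Nat.dist (coordN u) (coordN ((Ddiag E a b q hab hcup hq1 hq2 hp hmin).pair u))
      < ∑ u ∈ s, Nat.dist (coordN u) (coordN (E.pair u)) := by
    rw [hs, Finset.sum_insert hm1, Finset.sum_insert hm2, Finset.sum_insert hm3,
      Finset.sum_singleton, Finset.sum_insert hm1, Finset.sum_insert hm2,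
      Finset.sum_insert hm3, Finset.sum_singleton]
    rw [hDpair, hDpair, hDpair, hDpair, dpair_b E a b q,
      dpair_q E a b q hab hcup hq1 hq2 hp hmin,
      dpair_a E a b q hab hcup hq1 hq2 hp hmin,
      dpair_p E a b q hab hcup hq1 hq2 hp hmin,
      hcup, hcupb, hqq, coordN_inl_eq, coordN_inl_eq]
    simp only [Nat.dist]
    omega
  rw [mu, mu, ← Finset.sum_sdiff hsub, ← Finset.sum_sdiff hsub]
  rw [Finset.sum_congr rfl heq]
  exact Nat.add_lt_add_left hlt _

omit hab hcup hq1 hq2 hp hmin in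
lemma inUp_inl (k : Fin n) : (inUp (Sum.inl k : TLNode n n) : TriNode n n n) = Sum.inl k := rfl
omit hab hcup hq1 hq2 hp hmin in
lemma inUp_inr (k : Fin n) : (inUp (Sum.inr k : TLNode n n) : TriNode n n n) = Sum.inr (Sum.inl k) := rfl
omit hab hcup hq1 hq2 hp hmin in
lemma inDown_inl (k : Fin n) : (inDown (Sum.inl k : TLNode n n) : TriNode n n n) = Sum.inr (Sum.inl k) := rfl
omit hab hcup hq1 hq2 hp hmin in
lemma inDown_inr (k : Fin n) : (inDown (Sum.inr k : TLNode n n) : TriNode n n n) = Sum.inr (Sum.inr k) := rfl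
omit hab hcup hq1 hq2 hp hmin in
lemma inOut_inl (k : Fin n) : (inOut (Sum.inl k : TLNode n n) : TriNode n n n) = Sum.inl k := rfl
omit hab hcup hq1 hq2 hp hmin in
lemma inOut_inr (k : Fin n) : (inOut (Sum.inr k : TLNode n n) : TriNode n n n) = Sum.inr (Sum.inr k) := rfl

/-- the endpoint of smaller position on the strand of `x` in `E` -/
def endp (E' : TLDiagram n n) (x : TLNode n n) : TLNode n n :=
  if nodePos x ≤ nodePos (E'.pair x) then x else E'.pair x

omit hab hcup hq1 hq2 hp hmin in
lemma endp_pair (x : TLNode n n) : endp E (E.pair x) = endp E x := by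
  unfold endp
  rw [E.involutive x]
  split_ifs with h1 h2 h3
  · exact nodePos_inj (le_antisymm h1 h2)
  · rfl
  · rfl
  · omega

omit hab hcup hq1 hq2 hp hmin in
lemma endp_eq_cases (u v : TLNode n n) (h : endp E u = endp E v) :
    v = u ∨ v = E.pair u := by
  unfold endp at h
  split_ifs at h with h1 h2 h2
  · exact Or.inl h.symm
  · exact Or.inr (by rw [h, E.involutive])
  · exact Or.inr h.symm
  · exact Or.inl (E.involutive.injective h).symm

/-- invariant labelling of the nodes of the concatenation `U | D` -/
def gfun (E' : TLDiagram n n) (a' b' : Fin n) (q' : TLNode n n) : TriNode n n n → TLNode n n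
  | Sum.inl k => endp E' (Sum.inl k)
  | Sum.inr (Sum.inr k) => endp E' (Sum.inr k)
  | Sum.inr (Sum.inl k) => if k = a' ∨ k = b' then endp E' q' else endp E' (Sum.inl k)

omit hab hcup hq1 hq2 hp hmin in
lemma gfun_top (k : Fin n) : gfun E a b q (Sum.inl k) = endp E (Sum.inl k) := rfl
omit hab hcup hq1 hq2 hp hmin in
lemma gfun_bot (k : Fin n) : gfun E a b q (Sum.inr (Sum.inr k)) = endp E (Sum.inr k) := rfl
omit hab hcup hq1 hq2 hp hmin in
lemma gfun_mid_ab (k : Fin n) (h : k = a ∨ k = b) :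
    gfun E a b q (Sum.inr (Sum.inl k)) = endp E q := by
  show (if k = a ∨ k = b then endp E q else endp E (Sum.inl k)) = endp E q
  rw [if_pos h]
omit hab hcup hq1 hq2 hp hmin in
lemma gfun_mid (k : Fin n) (h1 : k ≠ a) (h2 : k ≠ b) :
    gfun E a b q (Sum.inr (Sum.inl k)) = endp E (Sum.inl k) := by
  show (if k = a ∨ k = b then endp E q else endp E (Sum.inl k)) = endp E (Sum.inl k)
  rw [if_neg (by tauto)]

lemma q_top_ne (j : Fin n) (hj : q = Sum.inl j) : j ≠ a ∧ j ≠ b := by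
  have hbn := b.isLt
  rw [hj, nodePos_inl'] at hq1
  constructor
  · intro h; rw [h] at hq1; omega
  · intro h; rw [h] at hq1; omega

lemma p_top_ne (j : Fin n) (hj : E.pair q = Sum.inl j) : j ≠ a ∧ j ≠ b := by
  have hbn := b.isLt
  have hjn := j.isLt
  rw [hj, nodePos_inl'] at hp
  constructor
  · intro h; rw [h] at hp; omega
  · intro h; rw [h] at hp; omega

lemma ep_top_ne (u : TLNode n n) (hu1 : u ≠ Sum.inl b) (hu2 : u ≠ Sum.inl a)
    (j : Fin n) (hj : E.pair u = Sum.inl j) : j ≠ a ∧ j ≠ b := by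
  have hcupb : E.pair (Sum.inl b) = Sum.inl a := by rw [← hcup, E.involutive]
  constructor
  · intro h
    rw [h] at hj
    exact hu1 (by rw [← hcup, ← hj, E.involutive])
  · intro h
    rw [h] at hj
    exact hu2 (by rw [← hcupb, ← hj, E.involutive])

lemma g_linked : ∀ x y, Linked (Udiag a b hab) (Ddiag E a b q hab hcup hq1 hq2 hp hmin) x y →
    gfun E a b q x = gfun E a b q y := by
  have hcupb : E.pair (Sum.inl b) = Sum.inl a := by rw [← hcup, E.involutive]
  rintro x y (⟨t, rfl, rfl⟩ | ⟨t, rfl, rfl⟩)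
  · -- U-link
    have hU : (Udiag a b hab).pair = upair a b := rfl
    rw [hU]
    cases t with
    | inl k =>
      by_cases h1 : k = a
      · rw [h1, upair_inl_a a b hab, inUp_inl, inUp_inl, gfun_top, gfun_top, ← hcup,
          endp_pair E]
      · by_cases h2 : k = b
        · rw [h2, upair_inl_b a b hab, inUp_inl, inUp_inl, gfun_top, gfun_top, ← hcupb,
            endp_pair E]
        · rw [upair_inl_other a b hab k h1 h2, inUp_inl, inUp_inr, gfun_top,
            gfun_mid E a b q k h1 h2]
    | inr k =>
      by_cases h1 : k = a
      · rw [h1, upair_inr_a a b hab, inUp_inr, inUp_inr,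
          gfun_mid_ab E a b q a (Or.inl rfl), gfun_mid_ab E a b q b (Or.inr rfl)]
      · by_cases h2 : k = b
        · rw [h2, upair_inr_b a b hab, inUp_inr, inUp_inr,
            gfun_mid_ab E a b q b (Or.inr rfl), gfun_mid_ab E a b q a (Or.inl rfl)]
        · rw [upair_inr_other a b hab k h1 h2, inUp_inr, inUp_inl, gfun_top,
            gfun_mid E a b q k h1 h2]
  · -- D-link
    have hD : (Ddiag E a b q hab hcup hq1 hq2 hp hmin).pair = dpair E a b q := rfl
    rw [hD]
    obtain ⟨d1, d2, d3, d4, d5, d6⟩ := step_distinct E a b q hab hcup hq1 hq2 hp hmin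
    have sum_cases : ∀ x : TLNode n n, (∃ j, x = Sum.inl j) ∨ (∃ j, x = Sum.inr j) := by
      intro x
      cases x with
      | inl j => exact Or.inl ⟨j, rfl⟩
      | inr j => exact Or.inr ⟨j, rfl⟩
    cases t with
    | inl k =>
      by_cases h1 : k = b
      · rw [h1, dpair_b E a b q, inDown_inl, gfun_mid_ab E a b q b (Or.inr rfl)]
        rcases sum_cases q with ⟨j, hqe⟩ | ⟨j, hqe⟩
        · obtain ⟨j1, j2⟩ := q_top_ne E a b q hab hcup hq1 hq2 hp hmin j hqe
          rw [hqe, inDown_inl, gfun_mid E a b (Sum.inl j) j j1 j2]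
        · rw [hqe, inDown_inr, gfun_bot]
      · by_cases h2 : k = a
        · rw [h2, dpair_a E a b q hab hcup hq1 hq2 hp hmin, inDown_inl,
            gfun_mid_ab E a b q a (Or.inl rfl)]
          rcases sum_cases (E.pair q) with ⟨j, hpe⟩ | ⟨j, hpe⟩
          · obtain ⟨j1, j2⟩ := p_top_ne E a b q hab hcup hq1 hq2 hp hmin j hpe
            rw [hpe, inDown_inl, gfun_mid E a b q j j1 j2, ← hpe, endp_pair E]
          · rw [hpe, inDown_inr, gfun_bot, ← hpe, endp_pair E]
        · by_cases h3 : Sum.inl k = q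
          · have hd : dpair E a b q (Sum.inl k) = Sum.inl b := by
              rw [h3]; exact dpair_q E a b q hab hcup hq1 hq2 hp hmin
            rw [hd, inDown_inl, inDown_inl, gfun_mid E a b q k h2 h1,
              gfun_mid_ab E a b q b (Or.inr rfl), h3]
          · by_cases h4 : Sum.inl k = E.pair q
            · have hd : dpair E a b q (Sum.inl k) = Sum.inl a := by
                rw [h4]; exact dpair_p E a b q hab hcup hq1 hq2 hp hmin
              rw [hd, inDown_inl, inDown_inl, gfun_mid E a b q k h2 h1,
                gfun_mid_ab E a b q a (Or.inl rfl), h4]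
              exact endp_pair E q
            · have hkb : Sum.inl k ≠ (Sum.inl b : TLNode n n) := by
                intro h; exact h1 (by injection h)
              have hka : Sum.inl k ≠ (Sum.inl a : TLNode n n) := by
                intro h; exact h2 (by injection h)
              rw [dpair_other E a b q (Sum.inl k) hkb h3 hka h4, inDown_inl,
                gfun_mid E a b q k h2 h1]
              rcases sum_cases (E.pair (Sum.inl k)) with ⟨j, hpe⟩ | ⟨j, hpe⟩
              · obtain ⟨j1, j2⟩ := ep_top_ne E a b q hab hcup hq1 hq2 hp hmin
                  (Sum.inl k) hkb hka j hpe
                rw [hpe, inDown_inl, gfun_mid E a b q j j1 j2, ← hpe, endp_pair E]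
              · rw [hpe, inDown_inr, gfun_bot, ← hpe, endp_pair E]
    | inr k =>
      have hkb : Sum.inr k ≠ (Sum.inl b : TLNode n n) := by simp
      have hka : Sum.inr k ≠ (Sum.inl a : TLNode n n) := by simp
      by_cases h3 : Sum.inr k = q
      · have hd : dpair E a b q (Sum.inr k) = Sum.inl b := by
          rw [h3]; exact dpair_q E a b q hab hcup hq1 hq2 hp hmin
        rw [hd, inDown_inr, inDown_inl, gfun_mid_ab E a b q b (Or.inr rfl), gfun_bot, h3]
      · by_cases h4 : Sum.inr k = E.pair q
        · have hd : dpair E a b q (Sum.inr k) = Sum.inl a := by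
            rw [h4]; exact dpair_p E a b q hab hcup hq1 hq2 hp hmin
          rw [hd, inDown_inr, inDown_inl, gfun_mid_ab E a b q a (Or.inl rfl), gfun_bot, h4]
          exact endp_pair E q
        · have sum_cases : ∀ x : TLNode n n, (∃ j, x = Sum.inl j) ∨ (∃ j, x = Sum.inr j) := by
            intro x
            cases x with
            | inl j => exact Or.inl ⟨j, rfl⟩
            | inr j => exact Or.inr ⟨j, rfl⟩
          rw [dpair_other E a b q (Sum.inr k) hkb h3 hka h4, inDown_inr, gfun_bot]
          rcases sum_cases (E.pair (Sum.inr k)) with ⟨j, hpe⟩ | ⟨j, hpe⟩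
          · obtain ⟨j1, j2⟩ := ep_top_ne E a b q hab hcup hq1 hq2 hp hmin
              (Sum.inr k) hkb hka j hpe
            rw [hpe, inDown_inl, gfun_mid E a b q j j1 j2, ← hpe, endp_pair E]
          · rw [hpe, inDown_inr, gfun_bot, ← hpe, endp_pair E]

lemma g_joined : ∀ x y, Joined (Udiag a b hab) (Ddiag E a b q hab hcup hq1 hq2 hp hmin) x y →
    gfun E a b q x = gfun E a b q y := by
  intro x y h
  induction h with
  | refl => rfl
  | tail _ hlink ih =>
    exact ih.trans (g_linked E a b q hab hcup hq1 hq2 hp hmin _ _ hlink)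

lemma linkU' (t : TLNode n n) :
    Linked (Udiag a b hab) (Ddiag E a b q hab hcup hq1 hq2 hp hmin)
      (inUp t) (inUp (upair a b t)) :=
  Or.inl ⟨t, rfl, rfl⟩

lemma linkD' (t : TLNode n n) :
    Linked (Udiag a b hab) (Ddiag E a b q hab hcup hq1 hq2 hp hmin)
      (inDown t) (inDown (dpair E a b q t)) :=
  Or.inr ⟨t, rfl, rfl⟩

lemma joined_symm' (x y : TriNode n n n)
    (h : Joined (Udiag a b hab) (Ddiag E a b q hab hcup hq1 hq2 hp hmin) x y) :
    Joined (Udiag a b hab) (Ddiag E a b q hab hcup hq1 hq2 hp hmin) y x := by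
  have hsym : Symmetric (Linked (Udiag a b hab) (Ddiag E a b q hab hcup hq1 hq2 hp hmin)) := by
    rintro x' y' (⟨t, rfl, rfl⟩ | ⟨t, rfl, rfl⟩)
    · refine Or.inl ⟨(Udiag a b hab).pair t, rfl, ?_⟩
      rw [(Udiag a b hab).involutive]
    · refine Or.inr ⟨(Ddiag E a b q hab hcup hq1 hq2 hp hmin).pair t, rfl, ?_⟩
      rw [(Ddiag E a b q hab hcup hq1 hq2 hp hmin).involutive]
  haveI : Std.Symm (Linked (Udiag a b hab) (Ddiag E a b q hab hcup hq1 hq2 hp hmin)) := ⟨hsym⟩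
  exact Relation.ReflTransGen.symmetric.symm _ _ h

lemma out_down (x : TLNode n n) (hx : ∀ k : Fin n, x = Sum.inl k → k ≠ a ∧ k ≠ b) :
    Joined (Udiag a b hab) (Ddiag E a b q hab hcup hq1 hq2 hp hmin) (inOut x) (inDown x) := by
  cases x with
  | inl k =>
    obtain ⟨h1, h2⟩ := hx k rfl
    have hl := linkU' E a b q hab hcup hq1 hq2 hp hmin (Sum.inl k)
    rw [upair_inl_other a b hab k h1 h2] at hl
    exact Relation.ReflTransGen.single hl
  | inr k => exact Relation.ReflTransGen.refl

lemma joined_pair (u : TLNode n n) :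
    Joined (Udiag a b hab) (Ddiag E a b q hab hcup hq1 hq2 hp hmin)
      (inOut u) (inOut (E.pair u)) := by
  have hcupb : E.pair (Sum.inl b) = Sum.inl a := by rw [← hcup, E.involutive]
  obtain ⟨d1, d2, d3, d4, d5, d6⟩ := step_distinct E a b q hab hcup hq1 hq2 hp hmin
  have hqchain : Joined (Udiag a b hab) (Ddiag E a b q hab hcup hq1 hq2 hp hmin)
      (inOut q) (inOut (E.pair q)) := by
    have s1 : Joined (Udiag a b hab) (Ddiag E a b q hab hcup hq1 hq2 hp hmin)
        (inOut q) (inDown q) :=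
      out_down E a b q hab hcup hq1 hq2 hp hmin q
        (fun k hk => q_top_ne E a b q hab hcup hq1 hq2 hp hmin k hk)
    have s2 : Linked (Udiag a b hab) (Ddiag E a b q hab hcup hq1 hq2 hp hmin)
        (inDown q) (Sum.inr (Sum.inl b)) := by
      have hl := linkD' E a b q hab hcup hq1 hq2 hp hmin q
      rw [dpair_q E a b q hab hcup hq1 hq2 hp hmin] at hl
      exact hl
    have s3 : Linked (Udiag a b hab) (Ddiag E a b q hab hcup hq1 hq2 hp hmin)
        (Sum.inr (Sum.inl b)) (Sum.inr (Sum.inl a)) := by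
      have hl := linkU' E a b q hab hcup hq1 hq2 hp hmin (Sum.inr b)
      rw [upair_inr_b a b hab] at hl
      exact hl
    have s4 : Linked (Udiag a b hab) (Ddiag E a b q hab hcup hq1 hq2 hp hmin)
        (Sum.inr (Sum.inl a)) (inDown (E.pair q)) := by
      have hl := linkD' E a b q hab hcup hq1 hq2 hp hmin (Sum.inl a)
      rw [dpair_a E a b q hab hcup hq1 hq2 hp hmin] at hl
      exact hl
    have s5 : Joined (Udiag a b hab) (Ddiag E a b q hab hcup hq1 hq2 hp hmin)
        (inDown (E.pair q)) (inOut (E.pair q)) :=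
      joined_symm' E a b q hab hcup hq1 hq2 hp hmin _ _
        (out_down E a b q hab hcup hq1 hq2 hp hmin (E.pair q)
          (fun k hk => p_top_ne E a b q hab hcup hq1 hq2 hp hmin k hk))
    exact ((((s1.tail s2).tail s3).tail s4).trans s5)
  by_cases hu1 : u = Sum.inl a
  · rw [hu1, hcup]
    have hl := linkU' E a b q hab hcup hq1 hq2 hp hmin (Sum.inl a)
    rw [upair_inl_a a b hab] at hl
    exact Relation.ReflTransGen.single hl
  · by_cases hu2 : u = Sum.inl b
    · rw [hu2, hcupb]
      have hl := linkU' E a b q hab hcup hq1 hq2 hp hmin (Sum.inl b)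
      rw [upair_inl_b a b hab] at hl
      exact Relation.ReflTransGen.single hl
    · by_cases hu3 : u = q
      · rw [hu3]; exact hqchain
      · by_cases hu4 : u = E.pair q
        · rw [hu4, E.involutive]
          exact joined_symm' E a b q hab hcup hq1 hq2 hp hmin _ _ hqchain
        · have s1 : Joined (Udiag a b hab) (Ddiag E a b q hab hcup hq1 hq2 hp hmin)
              (inOut u) (inDown u) :=
            out_down E a b q hab hcup hq1 hq2 hp hmin u
              (fun k hk => by
                constructor
                · intro h; rw [h] at hk; exact hu1 hk
                · intro h; rw [h] at hk; exact hu2 hk)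
          have s2 : Linked (Udiag a b hab) (Ddiag E a b q hab hcup hq1 hq2 hp hmin)
              (inDown u) (inDown (E.pair u)) := by
            have hl := linkD' E a b q hab hcup hq1 hq2 hp hmin u
            rw [dpair_other E a b q u hu2 hu3 hu1 hu4] at hl
            exact hl
          have s3 : Joined (Udiag a b hab) (Ddiag E a b q hab hcup hq1 hq2 hp hmin)
              (inDown (E.pair u)) (inOut (E.pair u)) :=
            joined_symm' E a b q hab hcup hq1 hq2 hp hmin _ _
              (out_down E a b q hab hcup hq1 hq2 hp hmin (E.pair u)
                (fun k hk => ep_top_ne E a b q hab hcup hq1 hq2 hp hmin u hu2 hu1 k hk))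
          exact (s1.tail s2).trans s3

lemma isComposite' :
    IsComposite (Udiag a b hab) (Ddiag E a b q hab hcup hq1 hq2 hp hmin) E := by
  intro u v
  constructor
  · intro h
    constructor
    · intro he
      rw [← he] at h
      exact E.fixedFree u h
    · rw [← h]
      exact joined_pair E a b q hab hcup hq1 hq2 hp hmin u
  · rintro ⟨hne, hj⟩
    have hg := g_joined E a b q hab hcup hq1 hq2 hp hmin _ _ hj
    have hg' : endp E u = endp E v := by
      cases u <;> cases v <;> exact hg
    rcases endp_eq_cases E u v hg' with h | h
    · exact absurd h.symm hne
    · exact h.symm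

lemma zeta_zero : zeta (Udiag a b hab) (Ddiag E a b q hab hcup hq1 hq2 hp hmin) = 0 := by
  have hie : IsEmpty {c : Quot (Linked (Udiag a b hab) (Ddiag E a b q hab hcup hq1 hq2 hp hmin)) //
      ∀ v, Quot.mk (Linked (Udiag a b hab) (Ddiag E a b q hab hcup hq1 hq2 hp hmin)) v = c →
        IsMiddle v} := by
    constructor
    rintro ⟨c, hc⟩
    obtain ⟨t, rfl⟩ := Quot.exists_rep c
    have sum_cases : ∀ x : TLNode n n, (∃ j, x = Sum.inl j) ∨ (∃ j, x = Sum.inr j) := by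
      intro x
      cases x with
      | inl j => exact Or.inl ⟨j, rfl⟩
      | inr j => exact Or.inr ⟨j, rfl⟩
    cases t with
    | inl k => exact hc _ rfl
    | inr t' =>
      cases t' with
      | inr k => exact hc _ rfl
      | inl k =>
        by_cases h1 : k = a
        · have l1 : Linked (Udiag a b hab) (Ddiag E a b q hab hcup hq1 hq2 hp hmin)
              (Sum.inr (Sum.inl a)) (inDown (E.pair q)) := by
            have hl := linkD' E a b q hab hcup hq1 hq2 hp hmin (Sum.inl a)
            rw [dpair_a E a b q hab hcup hq1 hq2 hp hmin] at hl
            exact hl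
          rcases sum_cases (E.pair q) with ⟨j, hpe⟩ | ⟨j, hpe⟩
          · obtain ⟨j1, j2⟩ := p_top_ne E a b q hab hcup hq1 hq2 hp hmin j hpe
            have epe : inDown (E.pair q) = (Sum.inr (Sum.inl j) : TriNode n n n) := by
              rw [hpe, inDown_inl]
            rw [epe] at l1
            have l2 : Linked (Udiag a b hab) (Ddiag E a b q hab hcup hq1 hq2 hp hmin)
                (Sum.inr (Sum.inl j)) (Sum.inl j) := by
              have hl := linkU' E a b q hab hcup hq1 hq2 hp hmin (Sum.inr j)
              rw [upair_inr_other a b hab j j1 j2] at hl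
              exact hl
            have hq : Quot.mk (Linked (Udiag a b hab) (Ddiag E a b q hab hcup hq1 hq2 hp hmin)) (Sum.inr (Sum.inl k) : TriNode n n n) =
                Quot.mk (Linked (Udiag a b hab) (Ddiag E a b q hab hcup hq1 hq2 hp hmin)) (Sum.inl j : TriNode n n n) := by
              rw [h1]
              exact (Quot.sound l1).trans (Quot.sound l2)
            exact hc _ hq.symm
          · have epe : inDown (E.pair q) = (Sum.inr (Sum.inr j) : TriNode n n n) := by
              rw [hpe, inDown_inr]
            rw [epe] at l1
            have hq : Quot.mk (Linked (Udiag a b hab) (Ddiag E a b q hab hcup hq1 hq2 hp hmin)) (Sum.inr (Sum.inl k) : TriNode n n n) =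
                Quot.mk (Linked (Udiag a b hab) (Ddiag E a b q hab hcup hq1 hq2 hp hmin)) (Sum.inr (Sum.inr j) : TriNode n n n) := by
              rw [h1]
              exact Quot.sound l1
            exact hc _ hq.symm
        · by_cases h2 : k = b
          · have l1 : Linked (Udiag a b hab) (Ddiag E a b q hab hcup hq1 hq2 hp hmin)
                (Sum.inr (Sum.inl b)) (inDown q) := by
              have hl := linkD' E a b q hab hcup hq1 hq2 hp hmin (Sum.inl b)
              rw [dpair_b E a b q] at hl
              exact hl
            rcases sum_cases q with ⟨j, hqe⟩ | ⟨j, hqe⟩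
            · obtain ⟨j1, j2⟩ := q_top_ne E a b q hab hcup hq1 hq2 hp hmin j hqe
              have eqe : inDown q = (Sum.inr (Sum.inl j) : TriNode n n n) := by
                rw [hqe, inDown_inl]
              rw [eqe] at l1
              have l2 : Linked (Udiag a b hab) (Ddiag E a b q hab hcup hq1 hq2 hp hmin)
                  (Sum.inr (Sum.inl j)) (Sum.inl j) := by
                have hl := linkU' E a b q hab hcup hq1 hq2 hp hmin (Sum.inr j)
                rw [upair_inr_other a b hab j j1 j2] at hl
                exact hl
              have hq : Quot.mk (Linked (Udiag a b hab) (Ddiag E a b q hab hcup hq1 hq2 hp hmin)) (Sum.inr (Sum.inl k) : TriNode n n n) =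
                  Quot.mk (Linked (Udiag a b hab) (Ddiag E a b q hab hcup hq1 hq2 hp hmin)) (Sum.inl j : TriNode n n n) := by
                rw [h2]
                exact (Quot.sound l1).trans (Quot.sound l2)
              exact hc _ hq.symm
            · have eqe : inDown q = (Sum.inr (Sum.inr j) : TriNode n n n) := by
                rw [hqe, inDown_inr]
              rw [eqe] at l1
              have hq : Quot.mk (Linked (Udiag a b hab) (Ddiag E a b q hab hcup hq1 hq2 hp hmin)) (Sum.inr (Sum.inl k) : TriNode n n n) =
                  Quot.mk (Linked (Udiag a b hab) (Ddiag E a b q hab hcup hq1 hq2 hp hmin)) (Sum.inr (Sum.inr j) : TriNode n n n) := by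
                rw [h2]
                exact Quot.sound l1
              exact hc _ hq.symm
          · have l2 : Linked (Udiag a b hab) (Ddiag E a b q hab hcup hq1 hq2 hp hmin)
                (Sum.inr (Sum.inl k)) (Sum.inl k) := by
              have hl := linkU' E a b q hab hcup hq1 hq2 hp hmin (Sum.inr k)
              rw [upair_inr_other a b hab k h1 h2] at hl
              exact hl
            exact hc _ (Quot.sound l2).symm
  rw [zeta]
  exact @Nat.card_of_isEmpty _ hie

omit hcup hq1 hq2 hp hmin in
lemma isU' : IsU (b:ℕ) (Udiag a b hab) := by
  have h1 : 1 ≤ (b:ℕ) := by omega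
  refine ⟨h1, b.isLt, ?_, ?_, ?_⟩
  · have e1 : (⟨(b:ℕ)-1, by omega⟩ : Fin n) = a := Fin.ext (by simp; omega)
    rw [e1]
    have : (Udiag a b hab).pair (Sum.inl a) = Sum.inl b := upair_inl_a a b hab
    rw [this]
  · have e1 : (⟨(b:ℕ)-1, by omega⟩ : Fin n) = a := Fin.ext (by simp; omega)
    rw [e1]
    have : (Udiag a b hab).pair (Sum.inr a) = Sum.inr b := upair_inr_a a b hab
    rw [this]
  · intro k hk1 hk2
    have hka : k ≠ a := by
      intro h; rw [h] at hk1; omega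
    have hkb : k ≠ b := by
      intro h; rw [h] at hk2; exact hk2 rfl
    exact upair_inl_other a b hab k hka hkb

end StepD

section Final

variable {n : ℕ}

lemma exists_step (E : TLDiagram n n)
    (hc : ∃ a b : Fin n, E.pair (Sum.inl a) = Sum.inl b) :
    ∃ (i : ℕ) (U D : TLDiagram n n),
      IsU i U ∧ IsComposite U D E ∧ zeta U D = 0 ∧ mu D < mu E := by
  obtain ⟨a, b, hab, hcup⟩ := exists_adj_cup E hc
  obtain ⟨q, hq1, hq2, hp, hmin⟩ := exists_q E a b hab hcup
  exact ⟨(b:ℕ), Udiag a b hab, Ddiag E a b q hab hcup hq1 hq2 hp hmin,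
    isU' a b hab, isComposite' E a b q hab hcup hq1 hq2 hp hmin,
    zeta_zero E a b q hab hcup hq1 hq2 hp hmin,
    mu_lt E a b q hab hcup hq1 hq2 hp hmin⟩

lemma isId_of_no_cup (E : TLDiagram n n)
    (h : ¬ ∃ a b : Fin n, E.pair (Sum.inl a) = Sum.inl b) : IsId E := by
  classical
  have hσ' : ∀ k : Fin n, ∃ j : Fin n, E.pair (Sum.inl k) = Sum.inr j := by
    intro k
    rcases hE : E.pair (Sum.inl k) with j | j
    · exact absurd ⟨k, j, hE⟩ h
    · exact ⟨j, rfl⟩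
  choose σ hσ using hσ'
  have hmono : ∀ k l : Fin n, (k:ℕ) < (l:ℕ) → (σ k : ℕ) < (σ l : ℕ) := by
    intro k l hkl
    have hkn := k.isLt; have hln := l.isLt
    have hσk := (σ k).isLt; have hσl := (σ l).isLt
    have hne : (σ k : ℕ) ≠ (σ l : ℕ) := by
      intro hh
      have : σ k = σ l := Fin.ext hh
      have : E.pair (Sum.inl k) = E.pair (Sum.inl l) := by rw [hσ k, hσ l, this]
      have : (Sum.inl k : TLNode n n) = Sum.inl l := E.involutive.injective this
      have : k = l := by injection this
      rw [this] at hkl; omega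
    rcases Nat.lt_or_ge (σ k : ℕ) (σ l : ℕ) with hh | hh
    · exact hh
    · exfalso
      have hlt : (σ l : ℕ) < (σ k : ℕ) := by omega
      exact E.noncrossing (Sum.inl k) (Sum.inl l)
        (by rw [nodePos_inl', nodePos_inl']; omega)
        (by rw [nodePos_inl', hσ k, nodePos_inr']; omega)
        (by rw [hσ k, hσ l, nodePos_inr', nodePos_inr']; omega)
  have hinj : Function.Injective σ := by
    intro x y hxy
    have : E.pair (Sum.inl x) = E.pair (Sum.inl y) := by rw [hσ x, hσ y, hxy]
    have : (Sum.inl x : TLNode n n) = Sum.inl y := E.involutive.injective this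
    injection this
  have hle' : ∀ m : ℕ, ∀ k : Fin n, (k:ℕ) = m → (k:ℕ) ≤ (σ k : ℕ) := by
    intro m
    induction m using Nat.strong_induction_on with
    | _ m ih =>
      intro k hk
      by_cases h0 : (k:ℕ) = 0
      · omega
      · have hkn := k.isLt
        have hlt : (k:ℕ) - 1 < n := by omega
        have hval : ((⟨(k:ℕ) - 1, hlt⟩ : Fin n) : ℕ) = (k:ℕ) - 1 := rfl
        have h2 := ih ((k:ℕ) - 1) (by omega) ⟨(k:ℕ) - 1, hlt⟩ hval
        have h3 := hmono ⟨(k:ℕ) - 1, hlt⟩ k (by rw [hval]; omega)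
        rw [hval] at h2
        omega
  have hle : ∀ k : Fin n, (k:ℕ) ≤ (σ k : ℕ) := fun k => hle' (k:ℕ) k rfl
  have hid : ∀ k : Fin n, (σ k : ℕ) = (k : ℕ) := by
    by_contra hcon
    push_neg at hcon
    obtain ⟨k0, hk0⟩ := hcon
    have hlt : (k0:ℕ) < (σ k0 : ℕ) := by
      have := hle k0; omega
    have hsum : ∑ k : Fin n, ((σ k : ℕ)) = ∑ k : Fin n, (k:ℕ) := by
      have hbij : Function.Bijective σ := Finite.injective_iff_bijective.mp hinj
      exact Equiv.sum_comp (Equiv.ofBijective σ hbij) (fun x : Fin n => (x:ℕ))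
    have hslt : ∑ k : Fin n, (k:ℕ) < ∑ k : Fin n, ((σ k : ℕ)) :=
      Finset.sum_lt_sum (fun i _ => hle i) ⟨k0, Finset.mem_univ k0, hlt⟩
    omega
  intro k
  rw [hσ k]
  exact congrArg Sum.inr (Fin.ext (hid k))

end Final

/-- `𝒯_n` is generated as a unital `K`-algebra by
`𝒰_1, …, 𝒰_{n-1}`: every diagram in `D(n,n)` is a word in `1, 𝒰_1, …, 𝒰_{n-1}`. -/
theorem statement3 {n : ℕ} (E : TLDiagram n n) : GenTL E := by
  classical
  -- strong induction on the complexity measure `mu`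
  suffices H : ∀ N : ℕ, ∀ E : TLDiagram n n, mu E < N → GenTL E by
    exact H (mu E + 1) E (Nat.lt_succ_self _)
  intro N
  induction N with
  | zero => intro E h; exact absurd h (Nat.not_lt_zero _)
  | succ N ih =>
    intro E h
    by_cases hc : ∃ a b : Fin n, E.pair (Sum.inl a) = Sum.inl b
    · obtain ⟨i, U, D, hU, hcomp, hz, hmu⟩ := exists_step E hc
      exact GenTL.step i U D E (ih D (by omega)) hU hcomp hz
    · exact GenTL.unit E (isId_of_no_cup E hc)

end TLBlob
end
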